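/- arXiv:2004.01460 — 7 statements merged into one kernel-verified Lean document; each statement's English description precedes it below -/
import Mathlib

section
/- Let $a>0$ and let $x:(-\infty,0]\to\mathbb{R}$ be a bounded continuous function. If there exists a bounded continuous function $h:(-\infty,0]\to\mathbb{R}$ such that both $t\mapsto e^{at}h(t)$ and $t\mapsto e^{at}(h(t)-x(t))$ are nonnegative and nondecreasing on $(-\infty,0]$, then $\sup_{k\geq 1} V_{[-k,-k+1]}(x) < \infty$; in fact $V_{[-k,-k+1]}(x) \leq e^{a}(2\|h\|_\infty + \|x\|_\infty) + e^{a}\|x\|_\infty$ for every $k\geq 1$. -/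
open Set

/-- if there is a bounded continuous `h` with `e^{a·}h` and
`e^{a·}(h - x)` nonnegative and nondecreasing on `(-∞,0]`, then the variations of
`x` on the intervals `[-k,-k+1]` are uniformly bounded; in fact
`V_{[-k,-k+1]}(x) ≤ e^a (2‖h‖_∞ + ‖x‖_∞) + e^a ‖x‖_∞` for bounds `Mh, Mx` of
`h, x` respectively. -/
theorem stmt1 (a : ℝ) (ha : 0 < a) (x h : ℝ → ℝ)
    (hxcont : ContinuousOn x (Iic 0))
    (Mx : ℝ) (hMx : ∀ t ≤ (0:ℝ), |x t| ≤ Mx)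
    (hhcont : ContinuousOn h (Iic 0))
    (Mh : ℝ) (hMh : ∀ t ≤ (0:ℝ), |h t| ≤ Mh)
    (hpos : ∀ t ≤ (0:ℝ), 0 ≤ Real.exp (a * t) * h t)
    (hmono : MonotoneOn (fun t => Real.exp (a * t) * h t) (Iic 0))
    (hpos' : ∀ t ≤ (0:ℝ), 0 ≤ Real.exp (a * t) * (h t - x t))
    (hmono' : MonotoneOn (fun t => Real.exp (a * t) * (h t - x t)) (Iic 0)) :
    (∃ C : ℝ, ∀ k : ℕ, 1 ≤ k →
      eVariationOn x (Icc (-(k:ℝ)) (-(k:ℝ) + 1)) ≤ ENNReal.ofReal C) ∧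
    ∀ k : ℕ, 1 ≤ k →
      eVariationOn x (Icc (-(k:ℝ)) (-(k:ℝ) + 1)) ≤
        ENNReal.ofReal (Real.exp a * (2 * Mh + Mx) + Real.exp a * Mx) := by
  have hMx0 : 0 ≤ Mx := le_trans (abs_nonneg _) (hMx 0 le_rfl)
  have hMh0 : 0 ≤ Mh := le_trans (abs_nonneg _) (hMh 0 le_rfl)
  have main : ∀ k : ℕ, 1 ≤ k →
      eVariationOn x (Icc (-(k:ℝ)) (-(k:ℝ) + 1)) ≤
        ENNReal.ofReal (Real.exp a * (2 * Mh + Mx) + Real.exp a * Mx) := by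
    intro k hk
    have hk1 : (1:ℝ) ≤ (k:ℝ) := by exact_mod_cast hk
    apply iSup_le
    rintro ⟨n, u, hu, hus⟩
    dsimp only
    have hle0 : ∀ i, u i ≤ 0 := fun i => le_trans (hus i).2 (by linarith)
    have hgek : ∀ i, -(k:ℝ) ≤ u i := fun i => (hus i).1
    have huk : ∀ i, u i ≤ -(k:ℝ) + 1 := fun i => (hus i).2
    set g1 : ℝ → ℝ := fun t => Real.exp (a*t) * h t with hg1
    set g2 : ℝ → ℝ := fun t => Real.exp (a*t) * (h t - x t) with hg2
    set b : ℕ → ℝ := fun i =>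
      Real.exp (a*k) * ((g1 (u (i+1)) - g1 (u i)) + (g2 (u (i+1)) - g2 (u i)))
      + Real.exp (a*(-(k:ℝ)+1)) * Mx * (Real.exp (-(a * u i)) - Real.exp (-(a * u (i+1))))
      with hbdef
    -- monotonicity differences nonneg
    have hD1 : ∀ i, 0 ≤ g1 (u (i+1)) - g1 (u i) := fun i =>
      sub_nonneg.2 (hmono (hle0 i) (hle0 (i+1)) (hu (Nat.le_succ i)))
    have hD2 : ∀ i, 0 ≤ g2 (u (i+1)) - g2 (u i) := fun i =>
      sub_nonneg.2 (hmono' (hle0 i) (hle0 (i+1)) (hu (Nat.le_succ i)))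
    have hEm : ∀ i, Real.exp (-(a * u (i+1))) ≤ Real.exp (-(a * u i)) := fun i => by
      apply Real.exp_le_exp.2
      have := hu (Nat.le_succ i)
      nlinarith
    -- pointwise bound
    have hb : ∀ i, edist (x (u (i+1))) (x (u i)) ≤ ENNReal.ofReal (b i) := by
      intro i
      set t := u i
      set s := u (i+1)
      have hts : t ≤ s := hu (Nat.le_succ i)
      rw [edist_dist, Real.dist_eq]
      apply ENNReal.ofReal_le_ofReal
      have e1 : Real.exp (-(a*s)) * Real.exp (a*s) = 1 := by
        rw [← Real.exp_add]; simp
      have e2 : Real.exp (-(a*t)) * Real.exp (a*t) = 1 := by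
        rw [← Real.exp_add]; simp
      have key : x s - x t =
          Real.exp (-(a*s)) * ((g1 s - g1 t) - (g2 s - g2 t))
          + (Real.exp (-(a*s)) - Real.exp (-(a*t))) * (Real.exp (a*t) * x t) := by
        simp only [hg1, hg2]
        linear_combination (-(x s)) * e1 + x t * e2
      have habs : |x s - x t| ≤
          Real.exp (-(a*s)) * ((g1 s - g1 t) + (g2 s - g2 t))
          + (Real.exp (-(a*t)) - Real.exp (-(a*s))) * (Real.exp (a*t) * |x t|) := by
        rw [key]
        refine le_trans (abs_add_le _ _) (add_le_add ?_ ?_)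
        · rw [abs_mul, Real.abs_exp]
          refine mul_le_mul_of_nonneg_left ?_ (Real.exp_pos _).le
          refine le_trans (abs_sub _ _) ?_
          rw [abs_of_nonneg (hD1 i), abs_of_nonneg (hD2 i)]
        · rw [abs_mul, abs_mul, Real.abs_exp]
          have := hEm i
          rw [abs_of_nonpos (by simpa using this)]
          ring_nf
          exact le_refl _
      refine le_trans habs ?_
      -- now bound by b i
      have hEs : Real.exp (-(a*s)) ≤ Real.exp (a*(k:ℝ)) := by
        apply Real.exp_le_exp.2
        have := hgek (i+1); nlinarith
      have hEt : Real.exp (a*t) ≤ Real.exp (a*(-(k:ℝ)+1)) := by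
        apply Real.exp_le_exp.2
        have := huk i; nlinarith
      have hxt : |x t| ≤ Mx := hMx t (hle0 i)
      have hEmns : 0 ≤ Real.exp (-(a*t)) - Real.exp (-(a*s)) := sub_nonneg.2 (hEm i)
      simp only [hbdef]
      have hEtpos := (Real.exp_pos (a*t)).le
      have hxabs := abs_nonneg (x t)
      nlinarith [hD1 i, hD2 i, mul_le_mul hEt hxt hxabs (Real.exp_pos _).le,
        (Real.exp_pos (-(a*s))).le, (Real.exp_pos (a*(-(k:ℝ)+1))).le]
    have hbnn : ∀ i ∈ Finset.range n, 0 ≤ b i := by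
      intro i _
      have := hD1 i; have := hD2 i; have := hEm i
      have := (Real.exp_pos (a*(k:ℝ))).le
      have := (Real.exp_pos (a*(-(k:ℝ)+1))).le
      simp only [hbdef]
      nlinarith [mul_nonneg (Real.exp_pos (a*(-(k:ℝ)+1))).le hMx0]
    calc ∑ i ∈ Finset.range n, edist (x (u (i+1))) (x (u i))
        ≤ ∑ i ∈ Finset.range n, ENNReal.ofReal (b i) :=
          Finset.sum_le_sum (fun i _ => hb i)
      _ = ENNReal.ofReal (∑ i ∈ Finset.range n, b i) :=
          (ENNReal.ofReal_sum_of_nonneg hbnn).symm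
      _ ≤ ENNReal.ofReal (Real.exp a * (2 * Mh + Mx) + Real.exp a * Mx) := by
          apply ENNReal.ofReal_le_ofReal
          have hsum : ∑ i ∈ Finset.range n, b i =
              Real.exp (a*(k:ℝ)) * ((g1 (u n) - g1 (u 0)) + (g2 (u n) - g2 (u 0)))
              + Real.exp (a*(-(k:ℝ)+1)) * Mx *
                (Real.exp (-(a * u 0)) - Real.exp (-(a * u n))) := by
            simp only [hbdef]
            rw [Finset.sum_add_distrib, ← Finset.mul_sum, ← Finset.mul_sum]
            rw [Finset.sum_add_distrib, Finset.sum_range_sub (fun i => g1 (u i)),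
              Finset.sum_range_sub (fun i => g2 (u i))]
            have hlast : ∑ i ∈ Finset.range n,
                (Real.exp (-(a * u i)) - Real.exp (-(a * u (i+1)))) =
                Real.exp (-(a * u 0)) - Real.exp (-(a * u n)) :=
              Finset.sum_range_sub' (fun i => Real.exp (-(a * u i))) n
            rw [hlast]
          rw [hsum]
          -- final numeric bound
          have hEE : Real.exp (a*(k:ℝ)) * Real.exp (a*(-(k:ℝ)+1)) = Real.exp a := by
            rw [← Real.exp_add]; ring_nf
          have hgn1 : g1 (u n) ≤ Real.exp (a*(-(k:ℝ)+1)) * Mh := by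
            have h1 : h (u n) ≤ Mh := le_trans (le_abs_self _) (hMh _ (hle0 n))
            have h2 : Real.exp (a * u n) ≤ Real.exp (a*(-(k:ℝ)+1)) := by
              apply Real.exp_le_exp.2; have := huk n; nlinarith
            calc g1 (u n) ≤ Real.exp (a * u n) * Mh := by
                  exact mul_le_mul_of_nonneg_left h1 (Real.exp_pos _).le
              _ ≤ Real.exp (a*(-(k:ℝ)+1)) * Mh := mul_le_mul_of_nonneg_right h2 hMh0
          have hgn2 : g2 (u n) ≤ Real.exp (a*(-(k:ℝ)+1)) * (Mh + Mx) := by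
            have h1 : h (u n) - x (u n) ≤ Mh + Mx := by
              have := hMh _ (hle0 n); have := hMx _ (hle0 n)
              have := abs_le.1 (hMh _ (hle0 n)); have := abs_le.1 (hMx _ (hle0 n))
              linarith
            have h2 : Real.exp (a * u n) ≤ Real.exp (a*(-(k:ℝ)+1)) := by
              apply Real.exp_le_exp.2; have := huk n; nlinarith
            calc g2 (u n) ≤ Real.exp (a * u n) * (Mh + Mx) := by
                  exact mul_le_mul_of_nonneg_left h1 (Real.exp_pos _).le
              _ ≤ Real.exp (a*(-(k:ℝ)+1)) * (Mh + Mx) :=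
                  mul_le_mul_of_nonneg_right h2 (by linarith)
          have hg01 : 0 ≤ g1 (u 0) := hpos _ (hle0 0)
          have hg02 : 0 ≤ g2 (u 0) := hpos' _ (hle0 0)
          have hE0 : Real.exp (-(a * u 0)) ≤ Real.exp (a*(k:ℝ)) := by
            apply Real.exp_le_exp.2; have := hgek 0; nlinarith
          have hEn : 0 ≤ Real.exp (-(a * u n)) := (Real.exp_pos _).le
          have hEk : 0 ≤ Real.exp (a*(k:ℝ)) := (Real.exp_pos _).le
          have hEk1 : 0 ≤ Real.exp (a*(-(k:ℝ)+1)) := (Real.exp_pos _).le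
          nlinarith [mul_nonneg hEk1 hMx0, mul_le_mul_of_nonneg_right hE0
              (mul_nonneg hEk1 hMx0)]
  exact ⟨⟨_, main⟩, main⟩
end

section
/- Let $a>0$ and let $x:(-\infty,0]\to\mathbb{R}$ be a bounded continuous function. The following are equivalent: (i) $x$ has bounded variation on each interval $[-k,-k+1]$, $k\geq 1$, with $\sup_{k\geq 1}V_{[-k,-k+1]}(x)<\infty$; (ii) there exists a bounded continuous $h:(-\infty,0]\to\mathbb{R}$ such that $t\mapsto e^{at}h(t)$ and $t\mapsto e^{at}(h(t)-x(t))$ are both nonnegative and nondecreasing. -/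
open Set

lemma evar_le_of_sums {f : ℝ → ℝ} {s : Set ℝ} {c : ℝ}
    (hc : ∀ (n : ℕ) (u : ℕ → ℝ), Monotone u → (∀ i, u i ∈ s) →
      ∑ i ∈ Finset.range n, |f (u (i+1)) - f (u i)| ≤ c) :
    eVariationOn f s ≤ ENNReal.ofReal c := by
  rw [eVariationOn]
  refine iSup_le ?_
  rintro ⟨n, ⟨u, hu, us⟩⟩
  calc ∑ i ∈ Finset.range n, edist (f (u (i+1))) (f (u i))
      = ENNReal.ofReal (∑ i ∈ Finset.range n, |f (u (i+1)) - f (u i)|) := by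
        rw [ENNReal.ofReal_sum_of_nonneg (fun i _ => abs_nonneg _)]
        refine Finset.sum_congr rfl fun i _ => ?_
        rw [edist_dist, Real.dist_eq]
    _ ≤ _ := ENNReal.ofReal_le_ofReal (hc n u hu us)

lemma icc_add_icc (f : ℝ → ℝ) {a b c : ℝ} (hab : a ≤ b) (hbc : b ≤ c) :
    eVariationOn f (Icc a b) + eVariationOn f (Icc b c) = eVariationOn f (Icc a c) := by
  have := eVariationOn.Icc_add_Icc f (s := univ) hab hbc (mem_univ b)
  simpa using this

lemma iic_split (f : ℝ → ℝ) {s t : ℝ} (hst : s ≤ t) :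
    eVariationOn f (Iic t) = eVariationOn f (Iic s) + eVariationOn f (Icc s t) := by
  rw [← eVariationOn.union f (isGreatest_Iic (a := s)) (isLeast_Icc hst), Iic_union_Icc_eq_Iic hst]


lemma left_decay {f : ℝ → ℝ} {t0 w : ℝ} (hw : 0 < w)
    (hf : ContinuousWithinAt f (Iic t0) t0)
    (hfin : eVariationOn f (Icc (t0 - w) t0) ≠ ⊤)
    {ε : ℝ} (hε : 0 < ε) :
    ∃ s ∈ Ico (t0 - w) t0, eVariationOn f (Icc s t0) ≤ ENNReal.ofReal ε := by
  by_contra hcon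
  push_neg at hcon
  obtain ⟨δ0, hδ0, hδ0'⟩ := Metric.continuousWithinAt_iff.mp hf (ε/4) (by positivity)
  set δ := min δ0 w with hδdef
  have hδpos : 0 < δ := lt_min hδ0 hw
  have hδw : δ ≤ w := min_le_right _ _
  have hδ0le : δ ≤ δ0 := min_le_left _ _
  have hnear : ∀ r, t0 - δ < r → r ≤ t0 → edist (f t0) (f r) ≤ ENNReal.ofReal (ε/4) := by
    intro r h1 h2
    have : dist (f r) (f t0) < ε/4 := by
      refine hδ0' h2 ?_
      rw [Real.dist_eq, abs_of_nonpos (by linarith)]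
      linarith
    rw [edist_dist, dist_comm]
    exact ENNReal.ofReal_le_ofReal this.le
  have C : ∀ s, t0 - δ < s → s < t0 →
      ∃ s', s ≤ s' ∧ s' < t0 ∧ ENNReal.ofReal (3*ε/4) ≤ eVariationOn f (Icc s s') := by
    intro s hs1 hs2
    have hlt : ENNReal.ofReal ε < eVariationOn f (Icc s t0) :=
      hcon s ⟨by linarith, hs2⟩
    rw [eVariationOn, lt_iSup_iff] at hlt
    obtain ⟨⟨n, u, hu, us⟩, hsum⟩ := hlt
    replace hsum : ENNReal.ofReal ε <
        ∑ i ∈ Finset.range n, edist (f (u (i+1))) (f (u i)) := hsum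
    by_cases h0 : t0 ≤ u 0
    · exfalso
      have hall : ∀ i, u i = t0 := fun i =>
        le_antisymm (us i).2 (le_trans h0 (hu (Nat.zero_le i)))
      have hz : ∑ i ∈ Finset.range n, edist (f (u (i+1))) (f (u i)) = 0 := by
        refine Finset.sum_eq_zero fun i _ => ?_
        rw [hall (i+1), hall i, edist_self]
      rw [hz] at hsum
      exact ENNReal.not_lt_zero hsum
    · push_neg at h0
      classical
      set F := (Finset.range (n+1)).filter (fun i => u i < t0) with hF
      have hF0 : 0 ∈ F := Finset.mem_filter.mpr ⟨Finset.mem_range.mpr (Nat.succ_pos n), h0⟩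
      set j := F.max' ⟨0, hF0⟩ with hj
      have hjF : j ∈ F := F.max'_mem _
      have hjn : j ≤ n := Nat.lt_succ_iff.mp (Finset.mem_range.mp (Finset.mem_filter.mp hjF).1)
      have hjlt : u j < t0 := (Finset.mem_filter.mp hjF).2
      have hafter : ∀ i, j < i → i ≤ n → u i = t0 := by
        intro i hji hin
        refine le_antisymm (us i).2 ?_
        by_contra hc
        push_neg at hc
        have : i ∈ F := Finset.mem_filter.mpr ⟨Finset.mem_range.mpr (Nat.lt_succ_of_le hin), hc⟩
        exact absurd (F.le_max' i this) (not_le.mpr hji)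
      have hs0j : s ≤ u j := le_trans (us 0).1 (hu (Nat.zero_le j))
      have hsplit : ∑ i ∈ Finset.range n, edist (f (u (i+1))) (f (u i))
          ≤ (∑ i ∈ Finset.range j, edist (f (u (i+1))) (f (u i))) + ENNReal.ofReal (ε/4) := by
        rw [Finset.range_eq_Ico, ← Finset.sum_Ico_consecutive _ (Nat.zero_le j) hjn,
          ← Finset.range_eq_Ico]
        refine add_le_add le_rfl ?_
        rcases Nat.eq_or_lt_of_le hjn with hje | hjlt'
        · rw [hje]; simp
        · have hsingle : ∑ i ∈ Finset.Ico j n, edist (f (u (i+1))) (f (u i))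
              = edist (f (u (j+1))) (f (u j)) := by
            refine Finset.sum_eq_single_of_mem j (Finset.mem_Ico.mpr ⟨le_rfl, hjlt'⟩) ?_
            intro b hb hbj
            have hb' := Finset.mem_Ico.mp hb
            have hjb : j < b := lt_of_le_of_ne hb'.1 (Ne.symm hbj)
            rw [hafter (b+1) (Nat.lt_succ_of_lt hjb) hb'.2, hafter b hjb hb'.2.le, edist_self]
          rw [hsingle, hafter (j+1) (Nat.lt_succ_self j) hjlt']
          exact hnear (u j) (lt_of_lt_of_le hs1 hs0j) hjlt.le
      have hX : ENNReal.ofReal (3*ε/4) ≤ ∑ i ∈ Finset.range j, edist (f (u (i+1))) (f (u i)) := by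
        have h1 : ENNReal.ofReal (3*ε/4) + ENNReal.ofReal (ε/4)
            ≤ (∑ i ∈ Finset.range j, edist (f (u (i+1))) (f (u i))) + ENNReal.ofReal (ε/4) := by
          calc ENNReal.ofReal (3*ε/4) + ENNReal.ofReal (ε/4) = ENNReal.ofReal ε := by
                rw [← ENNReal.ofReal_add (by positivity) (by positivity)]
                congr 1
                ring
            _ ≤ _ := le_trans hsum.le hsplit
        exact (ENNReal.add_le_add_iff_right ENNReal.ofReal_ne_top).mp h1
      refine ⟨u j, hs0j, hjlt, le_trans hX ?_⟩
      set v : ℕ → ℝ := fun i => u (min i j) with hv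
      have hvmono : Monotone v := fun p q hpq => hu (min_le_min hpq le_rfl)
      have hvmem : ∀ i, v i ∈ Icc s (u j) :=
        fun i => ⟨le_trans (us 0).1 (hu (Nat.zero_le _)), hu (min_le_right i j)⟩
      have hbound := eVariationOn.sum_le (f := f) (n := j) hvmono hvmem
      have hrw : ∑ i ∈ Finset.range j, edist (f (u (i+1))) (f (u i))
          = ∑ i ∈ Finset.range j, edist (f (v (i+1))) (f (v i)) := by
        refine Finset.sum_congr rfl fun i hi => ?_
        have hi' := Finset.mem_range.mp hi
        rw [hv]
        simp only [min_eq_left hi'.le, min_eq_left (Nat.succ_le_of_lt hi')]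
      rw [hrw]
      exact hbound
  choose! next h1 h2 h3 using C
  set σ : ℕ → ℝ := fun n => next^[n] (t0 - δ/2) with hσ
  have key : ∀ n : ℕ, (t0 - δ < σ n ∧ σ n < t0) ∧
      ENNReal.ofReal (n * (3*ε/4)) ≤ eVariationOn f (Icc (t0 - δ) (σ n)) := by
    intro n
    induction n with
    | zero =>
      refine ⟨⟨by simp [hσ]; linarith, by simp [hσ]; linarith⟩, by simp⟩
    | succ n ih =>
      obtain ⟨⟨ha, hb⟩, hV⟩ := ih
      have hσs : σ (n+1) = next (σ n) := Function.iterate_succ_apply' _ _ _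
      have hs' := h1 (σ n) ha hb
      have hlt' := h2 (σ n) ha hb
      have hV' := h3 (σ n) ha hb
      rw [hσs]
      refine ⟨⟨lt_of_lt_of_le ha hs', hlt'⟩, ?_⟩
      rw [← icc_add_icc f (by linarith : t0 - δ ≤ σ n) hs']
      calc ENNReal.ofReal ((n+1 : ℕ) * (3*ε/4))
          = ENNReal.ofReal (n * (3*ε/4)) + ENNReal.ofReal (3*ε/4) := by
            rw [← ENNReal.ofReal_add (by positivity) (by positivity)]
            push_cast
            ring_nf
        _ ≤ _ := add_le_add hV hV'
  set B := (eVariationOn f (Icc (t0 - w) t0)).toReal with hB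
  have hub : ∀ n : ℕ, (n : ℝ) * (3*ε/4) ≤ B := by
    intro n
    have hmono : eVariationOn f (Icc (t0 - δ) (σ n)) ≤ eVariationOn f (Icc (t0 - w) t0) :=
      eVariationOn.mono f (Icc_subset_Icc (by linarith) ((key n).1.2.le))
    have := ENNReal.toReal_mono hfin (le_trans (key n).2 hmono)
    rwa [ENNReal.toReal_ofReal (by positivity)] at this
  obtain ⟨n, hn⟩ := exists_nat_gt (B / (3*ε/4))
  have : B < n * (3*ε/4) := by
    rw [div_lt_iff₀ (by positivity)] at hn
    linarith
  exact absurd (hub n) (not_le.mpr this)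

lemma evar_neg (f : ℝ → ℝ) (a b : ℝ) :
    eVariationOn (f ∘ Neg.neg) (Icc a b) = eVariationOn f (Icc (-b) (-a)) := by
  rw [eVariationOn.comp_eq_of_antitoneOn f Neg.neg (fun x _ y _ h => neg_le_neg h),
    Set.image_neg_eq_neg, Set.neg_Icc]

lemma right_decay {f : ℝ → ℝ} {t0 w : ℝ} (hw : 0 < w)
    (hf : ContinuousWithinAt f (Ici t0) t0)
    (hfin : eVariationOn f (Icc t0 (t0 + w)) ≠ ⊤)
    {ε : ℝ} (hε : 0 < ε) :
    ∃ s ∈ Ioc t0 (t0 + w), eVariationOn f (Icc t0 s) ≤ ENNReal.ofReal ε := by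
  have hcont : ContinuousWithinAt (f ∘ Neg.neg) (Iic (-t0)) (-t0) := by
    refine ContinuousWithinAt.comp (by simpa using hf)
      (continuous_neg.continuousWithinAt) ?_
    intro r hr
    simp only [mem_Iic] at hr
    simp only [mem_Ici]
    linarith
  have hfin' : eVariationOn (f ∘ Neg.neg) (Icc (-t0 - w) (-t0)) ≠ ⊤ := by
    rw [evar_neg]
    have h1 : -(-t0) = t0 := by ring
    have h2 : -(-t0 - w) = t0 + w := by ring
    rw [h1, h2]
    exact hfin
  obtain ⟨s, hs, hV⟩ := left_decay hw hcont hfin' hε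
  simp only [mem_Ico] at hs
  refine ⟨-s, ⟨by linarith [hs.2], by linarith [hs.1]⟩, ?_⟩
  have heq := evar_neg f s (-t0)
  rw [neg_neg] at heq
  rw [← heq]
  exact hV

set_option maxHeartbeats 1000000 in
lemma backward (a : ℝ) (ha : 0 < a) (x h : ℝ → ℝ) (Mx Mh : ℝ)
    (hMx : ∀ t ≤ (0:ℝ), |x t| ≤ Mx) (hMh : ∀ t ≤ (0:ℝ), |h t| ≤ Mh)
    (hPpos : ∀ t ≤ (0:ℝ), 0 ≤ Real.exp (a * t) * h t)
    (hP : MonotoneOn (fun t => Real.exp (a * t) * h t) (Iic 0))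
    (hQpos : ∀ t ≤ (0:ℝ), 0 ≤ Real.exp (a * t) * (h t - x t))
    (hQ : MonotoneOn (fun t => Real.exp (a * t) * (h t - x t)) (Iic 0))
    (k : ℕ) (hk : 1 ≤ k) :
    eVariationOn x (Icc (-(k:ℝ)) (-(k:ℝ)+1)) ≤ ENNReal.ofReal (Real.exp a * (2*Mh + 2*Mx)) := by
  have hk1 : (1:ℝ) ≤ (k:ℝ) := by exact_mod_cast hk
  have hMx0 : 0 ≤ Mx := le_trans (abs_nonneg _) (hMx 0 le_rfl)
  have hMh0 : 0 ≤ Mh := le_trans (abs_nonneg _) (hMh 0 le_rfl)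
  have hsub : Icc (-(k:ℝ)) (-(k:ℝ)+1) ⊆ Iic 0 := fun t ht => le_trans ht.2 (by linarith)
  set P : ℝ → ℝ := fun t => Real.exp (a * t) * h t with hPdef
  set Q : ℝ → ℝ := fun t => Real.exp (a * t) * (h t - x t) with hQdef
  apply evar_le_of_sums
  intro n u hu us
  set X := Real.exp (a * (k:ℝ)) with hX
  set Y := Real.exp (a * (-(k:ℝ)+1)) with hY
  have hXpos : 0 < X := Real.exp_pos _
  have hYpos : 0 < Y := Real.exp_pos _
  -- per term bound
  have hterm : ∀ i, i < n → |x (u (i+1)) - x (u i)| ≤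
      X * ((P (u (i+1)) - P (u i)) + (Q (u (i+1)) - Q (u i))
        + Mx * (Real.exp (a * u (i+1)) - Real.exp (a * u i))) := by
    intro i _
    set s := u i
    set t := u (i+1)
    have hst : s ≤ t := hu (Nat.le_succ i)
    have hsmem : s ∈ Icc (-(k:ℝ)) (-(k:ℝ)+1) := us i
    have htmem : t ∈ Icc (-(k:ℝ)) (-(k:ℝ)+1) := us (i+1)
    have hs0 : s ≤ 0 := hsub hsmem
    have ht0 : t ≤ 0 := hsub htmem
    set E1 := Real.exp (a * t) with hE1
    set E2 := Real.exp (a * s) with hE2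
    set E3 := Real.exp (-(a * t)) with hE3
    have hE3pos : 0 < E3 := Real.exp_pos _
    have h31 : E3 * E1 = 1 := by
      rw [hE3, hE1, ← Real.exp_add]
      have : -(a*t) + a*t = 0 := by ring
      rw [this, Real.exp_zero]
    have hE12 : E2 ≤ E1 := Real.exp_le_exp.mpr (mul_le_mul_of_nonneg_left hst ha.le)
    have hE3le : E3 ≤ X := Real.exp_le_exp.mpr (by nlinarith [htmem.1, ha.le])
    have hDP : 0 ≤ P t - P s := sub_nonneg.mpr (hP hs0 ht0 hst)
    have hDQ : 0 ≤ Q t - Q s := sub_nonneg.mpr (hQ hs0 ht0 hst)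
    have hid : x t - x s = E3 * ((P t - P s) - (Q t - Q s)) - x s * (E3 * (E1 - E2)) := by
      simp only [hPdef, hQdef, hE1, hE2, hE3]
      simp only [hE1, hE2, hE3] at h31
      linear_combination (x s - x t) * h31
    have habs : |x t - x s| ≤ E3 * ((P t - P s) + (Q t - Q s)) + Mx * (E3 * (E1 - E2)) := by
      rw [hid]
      refine le_trans (abs_sub _ _) (add_le_add ?_ ?_)
      · rw [abs_mul, abs_of_pos hE3pos]
        refine mul_le_mul_of_nonneg_left ?_ hE3pos.le
        rw [abs_le]
        constructor <;> linarith
      · rw [abs_mul]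
        rw [abs_of_nonneg (by nlinarith : (0:ℝ) ≤ E3 * (E1 - E2))]
        exact mul_le_mul_of_nonneg_right (hMx s hs0) (by nlinarith)
    refine le_trans habs ?_
    nlinarith [mul_nonneg (sub_nonneg.mpr hE3le) (add_nonneg hDP hDQ),
      mul_nonneg (mul_nonneg hMx0 (sub_nonneg.mpr hE3le)) (sub_nonneg.mpr hE12)]
  -- sum the bound
  have hsum : ∑ i ∈ Finset.range n, |x (u (i+1)) - x (u i)| ≤
      X * ((P (u n) - P (u 0)) + (Q (u n) - Q (u 0))
        + Mx * (Real.exp (a * u n) - Real.exp (a * u 0))) := by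
    calc ∑ i ∈ Finset.range n, |x (u (i+1)) - x (u i)|
        ≤ ∑ i ∈ Finset.range n, X * ((P (u (i+1)) - P (u i)) + (Q (u (i+1)) - Q (u i))
            + Mx * (Real.exp (a * u (i+1)) - Real.exp (a * u i))) :=
          Finset.sum_le_sum fun i hi => hterm i (Finset.mem_range.mp hi)
      _ = X * ((∑ i ∈ Finset.range n, (P (u (i+1)) - P (u i)))
            + (∑ i ∈ Finset.range n, (Q (u (i+1)) - Q (u i)))
            + Mx * ∑ i ∈ Finset.range n, (Real.exp (a * u (i+1)) - Real.exp (a * u i))) := by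
          rw [← Finset.mul_sum]
          congr 1
          rw [Finset.sum_add_distrib, Finset.sum_add_distrib, ← Finset.mul_sum]
      _ = _ := by
          rw [Finset.sum_range_sub (fun i => P (u i)), Finset.sum_range_sub (fun i => Q (u i)),
            Finset.sum_range_sub (fun i => Real.exp (a * u i))]
  -- final numeric bound
  refine le_trans hsum ?_
  have hu0 : u 0 ∈ Icc (-(k:ℝ)) (-(k:ℝ)+1) := us 0
  have hun : u n ∈ Icc (-(k:ℝ)) (-(k:ℝ)+1) := us n
  have hun0 : u n ≤ 0 := hsub hun
  have hu00 : u 0 ≤ 0 := hsub hu0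
  have hXY : X * Y = Real.exp a := by
    rw [hX, hY, ← Real.exp_add]
    congr 1
    ring
  have hPn : P (u n) ≤ Y * Mh := by
    have h1 : Real.exp (a * u n) ≤ Y := Real.exp_le_exp.mpr (mul_le_mul_of_nonneg_left hun.2 ha.le)
    have h2 : h (u n) ≤ Mh := le_trans (le_abs_self _) (hMh _ hun0)
    have := hPpos (u n) hun0
    calc P (u n) = Real.exp (a * u n) * h (u n) := rfl
      _ ≤ Y * Mh := by nlinarith [Real.exp_pos (a * u n), le_trans (neg_abs_le _) ((abs_le.mp (hMh _ hun0)).2 : h (u n) ≤ Mh)]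
  have hQn : Q (u n) ≤ Y * (Mh + Mx) := by
    have h1 : Real.exp (a * u n) ≤ Y := Real.exp_le_exp.mpr (mul_le_mul_of_nonneg_left hun.2 ha.le)
    have h2 : h (u n) - x (u n) ≤ Mh + Mx := by
      have := le_trans (le_abs_self _) (hMh _ hun0)
      have := le_trans (neg_abs_le _) (neg_le_neg (hMx _ hun0) : -Mx ≤ -|x (u n)|)
      have h3 := abs_le.mp (hMx _ hun0)
      have h4 := abs_le.mp (hMh _ hun0)
      linarith
    have hq0 : 0 ≤ Q (u n) := hQpos (u n) hun0
    calc Q (u n) = Real.exp (a * u n) * (h (u n) - x (u n)) := rfl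
      _ ≤ Y * (Mh + Mx) := by nlinarith [Real.exp_pos (a * u n)]
  have hP0 : 0 ≤ P (u 0) := hPpos (u 0) hu00
  have hQ0 : 0 ≤ Q (u 0) := hQpos (u 0) hu00
  have hEn : Real.exp (a * u n) ≤ Y := Real.exp_le_exp.mpr (mul_le_mul_of_nonneg_left hun.2 ha.le)
  have hE0 : 0 < Real.exp (a * u 0) := Real.exp_pos _
  rw [← hXY]
  nlinarith [mul_le_mul_of_nonneg_left hPn hXpos.le,
    mul_le_mul_of_nonneg_left hQn hXpos.le,
    mul_le_mul_of_nonneg_left (mul_le_mul_of_nonneg_left hEn hMx0) hXpos.le,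
    mul_nonneg hXpos.le hP0, mul_nonneg hXpos.le hQ0,
    mul_nonneg (mul_nonneg hXpos.le hMx0) hE0.le]

set_option maxHeartbeats 1000000 in
lemma forward (a : ℝ) (ha : 0 < a) (x : ℝ → ℝ)
    (hxcont : ContinuousOn x (Iic 0))
    (Mx : ℝ) (hMx : ∀ t ≤ (0:ℝ), |x t| ≤ Mx)
    (c : ℝ)
    (hvar : ∀ k : ℕ, 1 ≤ k → eVariationOn x (Icc (-(k:ℝ)) (-(k:ℝ) + 1)) ≤ ENNReal.ofReal c) :
    ∃ h : ℝ → ℝ, ContinuousOn h (Iic 0) ∧ (∃ Mh : ℝ, ∀ t ≤ (0:ℝ), |h t| ≤ Mh) ∧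
      (∀ t ≤ (0:ℝ), 0 ≤ Real.exp (a * t) * h t) ∧
      MonotoneOn (fun t => Real.exp (a * t) * h t) (Iic 0) ∧
      (∀ t ≤ (0:ℝ), 0 ≤ Real.exp (a * t) * (h t - x t)) ∧
      MonotoneOn (fun t => Real.exp (a * t) * (h t - x t)) (Iic 0) := by
  have hMx0 : 0 ≤ Mx := le_trans (abs_nonneg _) (hMx 0 le_rfl)
  set c' := max c 0 with hc'
  have hc'0 : 0 ≤ c' := le_max_right _ _
  set g : ℝ → ℝ := fun t => Real.exp (a * t) * x t with hg
  have hgcont : ContinuousOn g (Iic 0) := by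
    refine ContinuousOn.mul ?_ hxcont
    exact (Real.continuous_exp.comp (continuous_const.mul continuous_id)).continuousOn
  set q : ℝ := Real.exp (-a) with hq
  have hq1 : q < 1 := by
    have : Real.exp (-a) < Real.exp 0 := Real.exp_lt_exp.mpr (by linarith)
    rwa [Real.exp_zero] at this
  have hq0 : 0 < q := Real.exp_pos _
  set D : ℝ := c' + Mx with hD
  have hD0 : 0 ≤ D := add_nonneg hc'0 hMx0
  have h1q : 0 < 1 - q := by linarith
  set E : ℝ := D / (1 - q) with hE
  have hE0 : 0 ≤ E := div_nonneg hD0 h1q.le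
  -- partition sums of x are uniformly bounded by c'
  have hxsum : ∀ k : ℕ, 1 ≤ k → ∀ (n : ℕ) (u : ℕ → ℝ), Monotone u →
      (∀ i, u i ∈ Icc (-(k:ℝ)) (-(k:ℝ)+1)) →
      ∑ i ∈ Finset.range n, |x (u (i+1)) - x (u i)| ≤ c' := by
    intro k hk n u hu us
    have h1 := eVariationOn.sum_le (f := x) (n := n) hu us
    have h2 := le_trans h1 (le_trans (hvar k hk) (ENNReal.ofReal_le_ofReal (le_max_left c 0)))
    have h3 : ENNReal.ofReal (∑ i ∈ Finset.range n, |x (u (i+1)) - x (u i)|)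
        ≤ ENNReal.ofReal c' := by
      rw [ENNReal.ofReal_sum_of_nonneg (fun i _ => abs_nonneg _)]
      refine le_trans (le_of_eq ?_) h2
      refine Finset.sum_congr rfl fun i _ => ?_
      rw [edist_dist, Real.dist_eq]
    exact (ENNReal.ofReal_le_ofReal_iff hc'0).mp h3
  -- variation of g on [-k, -k+1]
  have G1 : ∀ k : ℕ, 1 ≤ k →
      eVariationOn g (Icc (-(k:ℝ)) (-(k:ℝ)+1)) ≤
        ENNReal.ofReal (Real.exp (a * (-(k:ℝ)+1)) * D) := by
    intro k hk
    apply evar_le_of_sums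
    intro n u hu us
    set Y := Real.exp (a * (-(k:ℝ)+1)) with hYd
    have hYpos : 0 < Y := Real.exp_pos _
    have hterm : ∀ s t : ℝ, s ∈ Icc (-(k:ℝ)) (-(k:ℝ)+1) → t ∈ Icc (-(k:ℝ)) (-(k:ℝ)+1) →
        s ≤ t → |g t - g s| ≤ Y * |x t - x s| + Mx * (Real.exp (a * t) - Real.exp (a * s)) := by
      intro s t hsm htm hst
      have hk1 : (1:ℝ) ≤ (k:ℝ) := by exact_mod_cast hk
      have hs0 : s ≤ 0 := by linarith [hsm.2]
      have hE1Y : Real.exp (a * t) ≤ Y := Real.exp_le_exp.mpr (mul_le_mul_of_nonneg_left htm.2 ha.le)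
      have hE21 : Real.exp (a * s) ≤ Real.exp (a * t) :=
        Real.exp_le_exp.mpr (mul_le_mul_of_nonneg_left hst ha.le)
      have hid : g t - g s = Real.exp (a*t) * (x t - x s)
          + (Real.exp (a*t) - Real.exp (a*s)) * x s := by
        simp only [hg]; ring
      rw [hid]
      refine le_trans (abs_add_le _ _) (add_le_add ?_ ?_)
      · rw [abs_mul, abs_of_pos (Real.exp_pos _)]
        exact mul_le_mul_of_nonneg_right hE1Y (abs_nonneg _)
      · rw [abs_mul, abs_of_nonneg (by linarith : (0:ℝ) ≤ Real.exp (a*t) - Real.exp (a*s))]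
        rw [mul_comm]
        exact mul_le_mul (hMx s hs0) le_rfl (by linarith) hMx0
    calc ∑ i ∈ Finset.range n, |g (u (i+1)) - g (u i)|
        ≤ ∑ i ∈ Finset.range n, (Y * |x (u (i+1)) - x (u i)|
            + Mx * (Real.exp (a * u (i+1)) - Real.exp (a * u i))) :=
          Finset.sum_le_sum fun i _ => hterm (u i) (u (i+1)) (us i) (us (i+1)) (hu (Nat.le_succ i))
      _ = Y * (∑ i ∈ Finset.range n, |x (u (i+1)) - x (u i)|)
            + Mx * (Real.exp (a * u n) - Real.exp (a * u 0)) := by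
          rw [Finset.sum_add_distrib, ← Finset.mul_sum, ← Finset.mul_sum,
            Finset.sum_range_sub (fun i => Real.exp (a * u i))]
      _ ≤ Y * c' + Mx * Y := by
          rcases Nat.eq_zero_or_pos n with hn0 | hnpos
          · subst hn0
            simp only [Finset.range_zero, Finset.sum_empty, mul_zero, sub_self, zero_add]
            positivity
          · refine add_le_add (mul_le_mul_of_nonneg_left (hxsum k hk n u hu us) hYpos.le) ?_
            have h1 : Real.exp (a * u n) ≤ Y :=
              Real.exp_le_exp.mpr (mul_le_mul_of_nonneg_left (us n).2 ha.le)
            have h2 : 0 < Real.exp (a * u 0) := Real.exp_pos _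
            nlinarith
      _ = Y * D := by rw [hD]; ring
  -- geometric chaining
  have G1' : ∀ m : ℕ, eVariationOn g (Icc (-(m:ℝ) - 1) (-(m:ℝ))) ≤
      ENNReal.ofReal (Real.exp (-(a * m)) * D) := by
    intro m
    have := G1 (m+1) (Nat.le_add_left 1 m)
    have e2 : (-(((m+1):ℕ):ℝ) + 1) = -(m:ℝ) := by push_cast; ring
    have e1 : (-(((m+1):ℕ):ℝ)) = -(m:ℝ) - 1 := by push_cast; ring
    rw [e2, e1] at this
    rw [show a * -(m:ℝ) = -(a * m) from by ring] at this
    exact this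
  have G2 : ∀ (d m : ℕ), eVariationOn g (Icc (-(m:ℝ) - (d:ℝ)) (-(m:ℝ))) ≤
      ENNReal.ofReal (Real.exp (-(a * m)) * E) := by
    intro d
    induction d with
    | zero =>
      intro m
      rw [Nat.cast_zero, sub_zero, Icc_self]
      have h0 : eVariationOn g {-(m:ℝ)} = 0 :=
        eVariationOn.subsingleton g subsingleton_singleton
      rw [h0]
      exact zero_le
    | succ d ih =>
      intro m
      have hsplit := icc_add_icc g
        (show -(m:ℝ) - ((d:ℕ)+1:ℕ) ≤ -(m:ℝ) - 1 by push_cast; linarith)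
        (show -(m:ℝ) - 1 ≤ -(m:ℝ) by linarith)
      rw [← hsplit]
      have hA : eVariationOn g (Icc (-(m:ℝ) - ((d:ℕ)+1:ℕ)) (-(m:ℝ) - 1)) ≤
          ENNReal.ofReal (Real.exp (-(a * (m+1))) * E) := by
        have := ih (m+1)
        have e1 : -(((m+1):ℕ):ℝ) - (d:ℝ) = -(m:ℝ) - ((d:ℕ)+1:ℕ) := by push_cast; ring
        have e2 : -(((m+1):ℕ):ℝ) = -(m:ℝ) - 1 := by push_cast; ring
        have e3 : -(a * (((m+1):ℕ):ℝ)) = -(a * ((m:ℝ)+1)) := by push_cast; ring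
        rw [e1, e2, e3] at this
        exact this
      have hB := G1' m
      refine le_trans (add_le_add hA hB) ?_
      rw [← ENNReal.ofReal_add (by positivity) (by positivity)]
      refine ENNReal.ofReal_le_ofReal ?_
      have hqe : Real.exp (-(a * ((m:ℝ)+1))) = Real.exp (-(a*m)) * q := by
        rw [hq, ← Real.exp_add]; congr 1; ring
      have hqED : q * E + D = E := by
        rw [hE]; field_simp; ring
      have : Real.exp (-(a * (m+1))) * E + Real.exp (-(a*m)) * D
          = Real.exp (-(a*m)) * (q * E + D) := by rw [hqe]; ring
      rw [this, hqED]
  -- tail bound for Iic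
  have G3 : ∀ (m : ℕ) (t : ℝ), t ≤ -(m:ℝ) →
      eVariationOn g (Iic t) ≤ ENNReal.ofReal (Real.exp (-(a * m)) * E) := by
    intro m t ht
    rw [eVariationOn]
    refine iSup_le ?_
    rintro ⟨n, u, hu, us⟩
    replace us : ∀ i, u i ≤ t := us
    set d := ⌈-(u 0) - (m:ℝ)⌉₊ with hd
    have hK : -(m:ℝ) - (d:ℝ) ≤ u 0 := by
      have := Nat.le_ceil (-(u 0) - (m:ℝ))
      linarith
    have hmem : ∀ i, u i ∈ Icc (-(m:ℝ) - (d:ℝ)) (-(m:ℝ)) :=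
      fun i => ⟨le_trans hK (hu (Nat.zero_le i)), le_trans (us i) ht⟩
    exact le_trans (eVariationOn.sum_le (f := g) (n := n) hu hmem) (G2 d m)
  have VIic : ∀ t ≤ (0:ℝ), eVariationOn g (Iic t) ≤ ENNReal.ofReal E := by
    intro t ht
    have := G3 0 t (by simpa using ht)
    simpa using this
  have Vne : ∀ t ≤ (0:ℝ), eVariationOn g (Iic t) ≠ ⊤ :=
    fun t ht => (lt_of_le_of_lt (VIic t ht) ENNReal.ofReal_lt_top).ne
  set p : ℝ → ℝ := fun t => (eVariationOn g (Iic t)).toReal with hp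
  have pmono : MonotoneOn p (Iic 0) := fun s _ t ht hst =>
    ENNReal.toReal_mono (Vne t ht) (eVariationOn.mono g (Iic_subset_Iic.mpr hst))
  have pnonneg : ∀ t, 0 ≤ p t := fun t => ENNReal.toReal_nonneg
  have Vinc : ∀ s t : ℝ, s ≤ t → t ≤ 0 → eVariationOn g (Icc s t) ≠ ⊤ := by
    intro s t hst ht hh
    refine Vne t ht (top_le_iff.mp ?_)
    rw [iic_split g hst, hh]
    simp
  have psub : ∀ s t : ℝ, s ≤ t → t ≤ 0 → p t = p s + (eVariationOn g (Icc s t)).toReal := by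
    intro s t hst ht
    have h1 := iic_split g hst
    rw [hp]
    simp only
    rw [h1, ENNReal.toReal_add (Vne s (le_trans hst ht)) (Vinc s t hst ht)]
  have pincr : ∀ s t : ℝ, s ≤ t → t ≤ 0 → g t - g s ≤ p t - p s := by
    intro s t hst ht
    have h4 : |g t - g s| ≤ (eVariationOn g (Icc s t)).toReal := by
      have h5 := eVariationOn.edist_le g (show s ∈ Icc s t from ⟨le_rfl, hst⟩)
        (show t ∈ Icc s t from ⟨hst, le_rfl⟩)
      have h6 := ENNReal.toReal_mono (Vinc s t hst ht) h5
      rwa [edist_dist, ENNReal.toReal_ofReal dist_nonneg, Real.dist_eq, abs_sub_comm] at h6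
    have := psub s t hst ht
    have := le_abs_self (g t - g s)
    linarith
  have pge : ∀ t ≤ (0:ℝ), g t ≤ p t := by
    intro t ht
    refine le_of_forall_pos_le_add ?_
    intro ε hε
    set s : ℝ := min t (Real.log (ε / (Mx+1)) / a) with hs
    have hst : s ≤ t := min_le_left _ _
    have hgs : |g s| ≤ ε := by
      have h1 : a * s ≤ Real.log (ε / (Mx+1)) := by
        have h2 : s ≤ Real.log (ε / (Mx+1)) / a := min_le_right _ _
        rw [le_div_iff₀ ha] at h2
        nlinarith [h2]
      have h3 : Real.exp (a * s) ≤ ε / (Mx+1) := by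
        have := Real.exp_le_exp.mpr h1
        rwa [Real.exp_log (by positivity)] at this
      have h4 : |g s| ≤ Real.exp (a * s) * Mx := by
        rw [hg]
        simp only
        rw [abs_mul, abs_of_pos (Real.exp_pos _)]
        exact mul_le_mul_of_nonneg_left (hMx s (le_trans hst ht)) (Real.exp_pos _).le
      have h5 : Real.exp (a*s) * Mx ≤ (ε / (Mx+1)) * (Mx+1) := by
        nlinarith [Real.exp_pos (a*s)]
      have h6 : (ε / (Mx+1)) * (Mx+1) = ε := by field_simp
      linarith
    have h7 := pincr s t hst ht
    have h8 := pnonneg s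
    have h9 := le_abs_self (g s)
    linarith
  have pbound : ∀ t ≤ (0:ℝ), p t ≤ Real.exp (a * t) * (Real.exp a * E) := by
    intro t ht
    set m := ⌊-t⌋₊ with hm
    have hm1 : (m:ℝ) ≤ -t := Nat.floor_le (by linarith)
    have hm2 : -t < (m:ℝ) + 1 := Nat.lt_floor_add_one _
    have h1 : p t ≤ Real.exp (-(a*m)) * E :=
      ENNReal.toReal_le_of_le_ofReal (by positivity) (G3 m t (by linarith))
    have h2 : Real.exp (-(a*(m:ℝ))) ≤ Real.exp (a*t) * Real.exp a := by
      rw [← Real.exp_add]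
      apply Real.exp_le_exp.mpr
      nlinarith
    calc p t ≤ Real.exp (-(a*m)) * E := h1
      _ ≤ (Real.exp (a*t) * Real.exp a) * E := mul_le_mul_of_nonneg_right h2 hE0
      _ = Real.exp (a * t) * (Real.exp a * E) := by ring
  -- continuity of p
  have pcont : ContinuousOn p (Iic 0) := by
    intro t0 ht0
    have hgc : ContinuousWithinAt g (Iic t0) t0 :=
      (hgcont t0 ht0).mono (Iic_subset_Iic.mpr ht0)
    rw [Metric.continuousWithinAt_iff]
    intro ε hε
    have hfinl : eVariationOn g (Icc (t0 - 1) t0) ≠ ⊤ := by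
      intro hh
      refine Vne t0 ht0 (top_le_iff.mp ?_)
      rw [← hh]
      exact eVariationOn.mono g (fun r hr => hr.2)
    obtain ⟨sl, hsl, hVl⟩ := left_decay one_pos hgc hfinl (half_pos hε)
    have hVlne : eVariationOn g (Icc sl t0) ≠ ⊤ :=
      (lt_of_le_of_lt hVl ENNReal.ofReal_lt_top).ne
    have hleft : ∀ t, sl ≤ t → t ≤ t0 → dist (p t) (p t0) ≤ ε/2 := by
      intro t h1 h2
      have heq := psub t t0 h2 ht0
      have hle : (eVariationOn g (Icc t t0)).toReal ≤ ε/2 := by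
        refine le_trans (ENNReal.toReal_mono hVlne
          (eVariationOn.mono g (Icc_subset_Icc_left h1))) ?_
        exact ENNReal.toReal_le_of_le_ofReal (by positivity) hVl
      rw [Real.dist_eq]
      have h3 : p t - p t0 = -(eVariationOn g (Icc t t0)).toReal := by linarith
      rw [h3, abs_neg, abs_of_nonneg ENNReal.toReal_nonneg]
      exact hle
    rcases lt_or_eq_of_le (mem_Iic.mp ht0) with hlt0 | h00
    · -- t0 < 0 : two-sided
      have hgc2 : ContinuousWithinAt g (Ici t0) t0 :=
        (hgcont.continuousAt (Iic_mem_nhds hlt0)).continuousWithinAt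
      have hfinr : eVariationOn g (Icc t0 (t0 + -t0)) ≠ ⊤ := by
        rw [show t0 + -t0 = (0:ℝ) from by ring]
        intro hh
        refine Vne 0 le_rfl (top_le_iff.mp ?_)
        rw [← hh]
        exact eVariationOn.mono g (fun r hr => hr.2)
      obtain ⟨sr, hsr, hVr⟩ := right_decay (by linarith : (0:ℝ) < -t0) hgc2 hfinr (half_pos hε)
      have hsr0 : sr ≤ 0 := by have := hsr.2; linarith
      have hVrne : eVariationOn g (Icc t0 sr) ≠ ⊤ :=
        (lt_of_le_of_lt hVr ENNReal.ofReal_lt_top).ne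
      have hright : ∀ t, t0 ≤ t → t ≤ sr → dist (p t) (p t0) ≤ ε/2 := by
        intro t h1 h2
        have heq := psub t0 t h1 (le_trans h2 hsr0)
        have hle : (eVariationOn g (Icc t0 t)).toReal ≤ ε/2 := by
          refine le_trans (ENNReal.toReal_mono hVrne
            (eVariationOn.mono g (Icc_subset_Icc_right h2))) ?_
          exact ENNReal.toReal_le_of_le_ofReal (by positivity) hVr
        rw [Real.dist_eq]
        have h3 : p t - p t0 = (eVariationOn g (Icc t0 t)).toReal := by linarith
        rw [h3, abs_of_nonneg ENNReal.toReal_nonneg]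
        exact hle
      refine ⟨min (t0 - sl) (sr - t0), lt_min (by linarith [hsl.2]) (by linarith [hsr.1]), ?_⟩
      intro t ht hdist
      rcases le_total t t0 with hc | hc
      · refine lt_of_le_of_lt (hleft t ?_ hc) (by linarith)
        have h5 : dist t t0 < t0 - sl := lt_of_lt_of_le hdist (min_le_left _ _)
        rw [Real.dist_eq, abs_of_nonpos (by linarith)] at h5
        linarith
      · refine lt_of_le_of_lt (hright t hc ?_) (by linarith)
        have h5 : dist t t0 < sr - t0 := lt_of_lt_of_le hdist (min_le_right _ _)
        rw [Real.dist_eq, abs_of_nonneg (by linarith)] at h5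
        linarith
    · -- t0 = 0
      refine ⟨t0 - sl, by linarith [hsl.2], ?_⟩
      intro t ht hdist
      have htle : t ≤ t0 := by rw [← h00] at ht; exact ht
      refine lt_of_le_of_lt (hleft t ?_ htle) (by linarith)
      rw [Real.dist_eq, abs_of_nonpos (by linarith)] at hdist
      linarith
  -- assemble h
  have key : ∀ t : ℝ, Real.exp (a*t) * (Real.exp (-(a*t)) * p t) = p t := by
    intro t
    rw [← mul_assoc, ← Real.exp_add, show a*t + -(a*t) = 0 from by ring,
      Real.exp_zero, one_mul]
  have key2 : ∀ t : ℝ, Real.exp (-(a*t)) * (Real.exp (a*t) * (Real.exp a * E))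
      = Real.exp a * E := by
    intro t
    rw [← mul_assoc, ← Real.exp_add, show -(a*t) + a*t = 0 from by ring,
      Real.exp_zero, one_mul]
  refine ⟨fun t => Real.exp (-(a*t)) * p t, ?_, ⟨Real.exp a * E, ?_⟩, ?_, ?_, ?_, ?_⟩
  · refine ContinuousOn.mul ?_ pcont
    exact (Real.continuous_exp.comp (continuous_const.mul continuous_id).neg).continuousOn
  · intro t ht
    have h1 : 0 ≤ Real.exp (-(a*t)) * p t := mul_nonneg (Real.exp_pos _).le (pnonneg t)
    rw [abs_of_nonneg h1]
    calc Real.exp (-(a*t)) * p t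
        ≤ Real.exp (-(a*t)) * (Real.exp (a*t) * (Real.exp a * E)) :=
          mul_le_mul_of_nonneg_left (pbound t ht) (Real.exp_pos _).le
      _ = Real.exp a * E := key2 t
  · intro t ht
    simp only
    rw [key]
    exact pnonneg t
  · intro s hs t ht hst
    simp only
    rw [key, key]
    exact pmono hs ht hst
  · intro t ht
    have h1 : Real.exp (a*t) * (Real.exp (-(a*t)) * p t - x t) = p t - g t := by
      rw [mul_sub, key]
    rw [h1]
    exact sub_nonneg.mpr (pge t ht)
  · intro s hs t ht hst
    simp only
    have h1 : ∀ r : ℝ, Real.exp (a*r) * (Real.exp (-(a*r)) * p r - x r) = p r - g r := by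
      intro r
      rw [mul_sub, key]
    rw [h1, h1]
    have := pincr s t hst ht
    linarith

/-- for a bounded continuous `x : (-∞,0] → ℝ`, having uniformly
bounded variation on the intervals `[-k,-k+1]` is equivalent to the existence of
a bounded continuous `h` with `e^{a·}h` and `e^{a·}(h-x)` nonnegative and
nondecreasing on `(-∞,0]`. -/
theorem stmt2 (a : ℝ) (ha : 0 < a) (x : ℝ → ℝ)
    (hxcont : ContinuousOn x (Iic 0))
    (hxbdd : ∃ Mx : ℝ, ∀ t ≤ (0:ℝ), |x t| ≤ Mx) :
    ((∀ k : ℕ, 1 ≤ k → BoundedVariationOn x (Icc (-(k:ℝ)) (-(k:ℝ) + 1))) ∧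
      ∃ c : ℝ, ∀ k : ℕ, 1 ≤ k →
        eVariationOn x (Icc (-(k:ℝ)) (-(k:ℝ) + 1)) ≤ ENNReal.ofReal c)
    ↔
    (∃ h : ℝ → ℝ, ContinuousOn h (Iic 0) ∧ (∃ Mh : ℝ, ∀ t ≤ (0:ℝ), |h t| ≤ Mh) ∧
      (∀ t ≤ (0:ℝ), 0 ≤ Real.exp (a * t) * h t) ∧
      MonotoneOn (fun t => Real.exp (a * t) * h t) (Iic 0) ∧
      (∀ t ≤ (0:ℝ), 0 ≤ Real.exp (a * t) * (h t - x t)) ∧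
      MonotoneOn (fun t => Real.exp (a * t) * (h t - x t)) (Iic 0)) := by
  obtain ⟨Mx, hMx⟩ := hxbdd
  constructor
  · rintro ⟨_, c, hc⟩
    exact forward a ha x hxcont Mx hMx c hc
  · rintro ⟨h, hcont, ⟨Mh, hMh⟩, hpos1, hmono1, hpos2, hmono2⟩
    have hb := backward a ha x h Mx Mh hMx hMh hpos1 hmono1 hpos2 hmono2
    exact ⟨fun k hk => (lt_of_le_of_lt (hb k hk) ENNReal.ofReal_lt_top).ne,
      ⟨Real.exp a * (2*Mh + 2*Mx), fun k hk => hb k hk⟩⟩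
end

section
/- Let $a>0$. The property that a bounded continuous function $x:(-\infty,0]\to\mathbb{R}$ admits a bounded continuous $h$ with $h\geq_A 0$ and $h\geq_A x$ (where $A=(-a)$) is independent of the choice of $a>0$; i.e., if it holds for some $a>0$ then it holds for every $a'>0$. -/
open Set MeasureTheory

private lemma expDeriv {k : ℝ} (hk : k ≠ 0) (r : ℝ) :
    HasDerivAt (fun u => Real.exp (k * u) / k) (Real.exp (k * r)) r := by
  have h1 : HasDerivAt (fun u : ℝ => Real.exp (k * u)) (Real.exp (k * r) * (k * 1)) r :=
    ((hasDerivAt_id r).const_mul k).exp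
  have h2 := h1.div_const k
  have h3 : Real.exp (k * r) * (k * 1) / k = Real.exp (k * r) := by field_simp
  rwa [h3] at h2

private lemma intervalExp {k : ℝ} (hk : k ≠ 0) (s t : ℝ) :
    ∫ r in s..t, Real.exp (k * r) = Real.exp (k * t) / k - Real.exp (k * s) / k := by
  apply intervalIntegral.integral_eq_sub_of_hasDerivAt (fun r _ => expDeriv hk r)
  exact (Real.continuous_exp.comp (continuous_const.mul continuous_id)).intervalIntegrable s t

private lemma expIntOn {k : ℝ} (hk : 0 < k) (t : ℝ) :
    IntegrableOn (fun r => Real.exp (k * r)) (Iic t) := by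
  apply integrableOn_Iic_of_intervalIntegral_norm_bounded (Real.exp (k * t) / k) t
    (a := fun n : ℕ => t - n) (l := Filter.atTop)
  · intro i
    exact ((Real.continuous_exp.comp (continuous_const.mul continuous_id)).integrableOn_Icc).mono_set
      Ioc_subset_Icc_self
  · have h1 : Filter.Tendsto (fun n : ℕ => (n : ℝ)) Filter.atTop Filter.atTop :=
      tendsto_natCast_atTop_atTop
    have h2 : Filter.Tendsto (fun n : ℕ => -(n : ℝ)) Filter.atTop Filter.atBot :=
      Filter.tendsto_neg_atBot_iff.mpr h1
    have h3 := Filter.tendsto_atBot_add_const_left Filter.atTop t h2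
    simpa [sub_eq_add_neg] using h3
  · apply Filter.Eventually.of_forall
    intro n
    have hnorm : ∀ r, ‖Real.exp (k * r)‖ = Real.exp (k * r) := fun r =>
      Real.norm_of_nonneg (Real.exp_pos _).le
    simp_rw [hnorm]
    rw [intervalExp hk.ne']
    have h4 := (Real.exp_pos (k * (t - (n : ℝ)))).le
    have h5 : 0 ≤ Real.exp (k * (t - (n : ℝ))) / k := div_nonneg h4 hk.le
    linarith

private lemma expIicVal {k : ℝ} (hk : 0 < k) (t : ℝ) :
    ∫ r in Iic t, Real.exp (k * r) = Real.exp (k * t) / k := by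
  have htend : Filter.Tendsto (fun u : ℝ => Real.exp (k * u) / k) Filter.atBot (nhds 0) := by
    have h1 : Filter.Tendsto (fun u : ℝ => k * u) Filter.atBot Filter.atBot :=
      Filter.Tendsto.const_mul_atBot hk Filter.tendsto_id
    have h2 := Real.tendsto_exp_atBot.comp h1
    have h3 := h2.div_const k
    simpa using h3
  have := integral_Iic_of_hasDerivAt_of_tendsto' (fun r _ => expDeriv hk.ne' r)
    (expIntOn hk t) htend
  simpa using this

private lemma monoUp {a b : ℝ} (hab : a ≤ b) {f : ℝ → ℝ} (hf : ∀ t ≤ (0 : ℝ), 0 ≤ f t)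
    (hm : MonotoneOn (fun t => Real.exp (a * t) * f t) (Iic 0)) :
    MonotoneOn (fun t => Real.exp (b * t) * f t) (Iic 0) := by
  intro s hs t ht hst
  simp only [mem_Iic] at hs ht
  have h1 : Real.exp (a * s) * f s ≤ Real.exp (a * t) * f t := hm hs ht hst
  have e1 : Real.exp (b * s) * f s = Real.exp ((b - a) * s) * (Real.exp (a * s) * f s) := by
    rw [← mul_assoc, ← Real.exp_add]; ring_nf
  have e2 : Real.exp (b * t) * f t = Real.exp ((b - a) * t) * (Real.exp (a * t) * f t) := by
    rw [← mul_assoc, ← Real.exp_add]; ring_nf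
  have h2 : Real.exp ((b - a) * s) ≤ Real.exp ((b - a) * t) := by
    apply Real.exp_le_exp.2
    nlinarith
  have h3 : 0 ≤ Real.exp (a * s) * f s := mul_nonneg (Real.exp_pos _).le (hf s hs)
  simp only
  rw [e1, e2]
  nlinarith [Real.exp_pos ((b - a) * t)]

private lemma keyA {a a' : ℝ} (hlt : a' < a) {g : ℝ → ℝ}
    (hg0 : ∀ r ≤ (0 : ℝ), 0 ≤ g r)
    (hgm : MonotoneOn (fun r => Real.exp (a * r) * g r) (Iic 0))
    {s t : ℝ} (hst : s ≤ t) (ht : t ≤ 0)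
    (hint : IntegrableOn (fun r => Real.exp (a' * r) * g r) (Ioc s t)) :
    Real.exp (a' * s) * g s ≤
      Real.exp (a' * t) * g t + (a - a') * ∫ r in Ioc s t, Real.exp (a' * r) * g r := by
  have hs0 : s ≤ 0 := hst.trans ht
  set Gs := Real.exp (a * s) * g s with hGs
  have hGs0 : 0 ≤ Gs := mul_nonneg (Real.exp_pos _).le (hg0 s hs0)
  have hGt : Gs ≤ Real.exp (a * t) * g t := hgm (mem_Iic.2 hs0) (mem_Iic.2 ht) hst
  have hlow : ∀ r ∈ Ioc s t, Real.exp ((a' - a) * r) * Gs ≤ Real.exp (a' * r) * g r := by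
    intro r hr
    have hr0 : r ≤ 0 := hr.2.trans ht
    have hG : Gs ≤ Real.exp (a * r) * g r := hgm (mem_Iic.2 hs0) (mem_Iic.2 hr0) hr.1.le
    have e : Real.exp (a' * r) * g r = Real.exp ((a' - a) * r) * (Real.exp (a * r) * g r) := by
      rw [← mul_assoc, ← Real.exp_add]; ring_nf
    rw [e]
    exact mul_le_mul_of_nonneg_left hG (Real.exp_pos _).le
  have hint2 : IntegrableOn (fun r => Real.exp ((a' - a) * r) * Gs) (Ioc s t) :=
    (((Real.continuous_exp.comp (continuous_const.mul continuous_id)).mul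
      continuous_const).integrableOn_Icc).mono_set Ioc_subset_Icc_self
  have hmono := setIntegral_mono_on hint2 hint measurableSet_Ioc hlow
  have hne : a' - a ≠ 0 := by linarith
  have hval : ∫ r in Ioc s t, Real.exp ((a' - a) * r) * Gs =
      (Real.exp ((a' - a) * t) / (a' - a) - Real.exp ((a' - a) * s) / (a' - a)) * Gs := by
    rw [integral_mul_const, ← intervalIntegral.integral_of_le hst, intervalExp hne]
  rw [hval] at hmono
  have e1 : Real.exp (a' * s) * g s = Real.exp ((a' - a) * s) * Gs := by
    rw [hGs, ← mul_assoc, ← Real.exp_add]; ring_nf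
  have e2 : Real.exp ((a' - a) * t) * Gs ≤ Real.exp (a' * t) * g t := by
    have e : Real.exp (a' * t) * g t = Real.exp ((a' - a) * t) * (Real.exp (a * t) * g t) := by
      rw [← mul_assoc, ← Real.exp_add]; ring_nf
    rw [e]
    exact mul_le_mul_of_nonneg_left hGt (Real.exp_pos _).le
  have hc : 0 < a - a' := by linarith
  rw [e1]
  have hineq := mul_le_mul_of_nonneg_left hmono hc.le
  have efin : (a - a') * ((Real.exp ((a' - a) * t) / (a' - a) -
      Real.exp ((a' - a) * s) / (a' - a)) * Gs) =
      Real.exp ((a' - a) * s) * Gs - Real.exp ((a' - a) * t) * Gs := by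
    field_simp
    ring
  rw [efin] at hineq
  linarith

private lemma mainMono {a a' : ℝ} (hlt : a' < a) {g k f : ℝ → ℝ}
    (hg0 : ∀ r ≤ (0 : ℝ), 0 ≤ g r) (hk0 : ∀ r ≤ (0 : ℝ), 0 ≤ k r)
    (hgc : ContinuousOn g (Iic 0)) (hkc : ContinuousOn k (Iic 0))
    (hgm : MonotoneOn (fun r => Real.exp (a * r) * g r) (Iic 0))
    (hfeq : ∀ r, f r = Real.exp (a' * r) * (g r + k r))
    (hfint : IntegrableOn f (Iic 0))
    {s t : ℝ} (hs : s ≤ 0) (ht : t ≤ 0) (hst : s ≤ t) :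
    Real.exp (a' * s) * g s + (a - a') * ∫ r in Iic s, f r ≤
      Real.exp (a' * t) * g t + (a - a') * ∫ r in Iic t, f r := by
  have hints : IntegrableOn f (Iic s) := hfint.mono_set (Iic_subset_Iic.2 hs)
  have hintt : IntegrableOn f (Iic t) := hfint.mono_set (Iic_subset_Iic.2 ht)
  have hsub : (∫ r in Iic t, f r) - ∫ r in Iic s, f r = ∫ r in Ioc s t, f r := by
    rw [intervalIntegral.integral_Iic_sub_Iic hints hintt, intervalIntegral.integral_of_le hst]
  have hIccsub : Icc s t ⊆ Iic (0 : ℝ) := fun r hr => hr.2.trans ht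
  have hcexp : Continuous (fun r : ℝ => Real.exp (a' * r)) :=
    Real.continuous_exp.comp (continuous_const.mul continuous_id)
  have hgint : IntegrableOn (fun r => Real.exp (a' * r) * g r) (Ioc s t) :=
    ((hcexp.continuousOn.mul (hgc.mono hIccsub)).integrableOn_Icc).mono_set
      Ioc_subset_Icc_self
  have hkint : IntegrableOn (fun r => Real.exp (a' * r) * k r) (Ioc s t) :=
    ((hcexp.continuousOn.mul (hkc.mono hIccsub)).integrableOn_Icc).mono_set
      Ioc_subset_Icc_self
  have hsplit : ∫ r in Ioc s t, f r =
      (∫ r in Ioc s t, Real.exp (a' * r) * g r) + ∫ r in Ioc s t, Real.exp (a' * r) * k r := by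
    rw [← integral_add hgint hkint]
    apply setIntegral_congr_fun measurableSet_Ioc
    intro r _
    rw [hfeq]; ring
  have hA := keyA hlt hg0 hgm hst ht hgint
  have hknn : 0 ≤ ∫ r in Ioc s t, Real.exp (a' * r) * k r :=
    setIntegral_nonneg measurableSet_Ioc
      (fun r hr => mul_nonneg (Real.exp_pos _).le (hk0 r (hr.2.trans ht)))
  have hc : (0 : ℝ) < a - a' := by linarith
  nlinarith [mul_nonneg hc.le hknn]

/-- the property of admitting a bounded continuous `h` with
`h ≥_A 0` and `h ≥_A x` (exponential order for `A = (-a)`) is independent of the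
choice of `a > 0`. -/
theorem stmt3 (a a' : ℝ) (ha : 0 < a) (ha' : 0 < a') (x : ℝ → ℝ)
    (hxcont : ContinuousOn x (Iic 0))
    (hxbdd : ∃ Mx : ℝ, ∀ t ≤ (0:ℝ), |x t| ≤ Mx)
    (hyp : ∃ h : ℝ → ℝ, ContinuousOn h (Iic 0) ∧
      (∃ Mh : ℝ, ∀ t ≤ (0:ℝ), |h t| ≤ Mh) ∧
      (∀ t ≤ (0:ℝ), 0 ≤ h t) ∧
      MonotoneOn (fun t => Real.exp (a * t) * h t) (Iic 0) ∧
      (∀ t ≤ (0:ℝ), x t ≤ h t) ∧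
      MonotoneOn (fun t => Real.exp (a * t) * (h t - x t)) (Iic 0)) :
    ∃ h : ℝ → ℝ, ContinuousOn h (Iic 0) ∧
      (∃ Mh : ℝ, ∀ t ≤ (0:ℝ), |h t| ≤ Mh) ∧
      (∀ t ≤ (0:ℝ), 0 ≤ h t) ∧
      MonotoneOn (fun t => Real.exp (a' * t) * h t) (Iic 0) ∧
      (∀ t ≤ (0:ℝ), x t ≤ h t) ∧
      MonotoneOn (fun t => Real.exp (a' * t) * (h t - x t)) (Iic 0) := by
  obtain ⟨Mx, hMx⟩ := hxbdd
  obtain ⟨h, hhc, ⟨Mh, hMh⟩, hh0, hm1, hhx, hm2⟩ := hyp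
  rcases le_or_gt a a' with hle | hlt
  · exact ⟨h, hhc, ⟨Mh, hMh⟩, hh0, monoUp hle hh0 hm1, hhx,
      monoUp hle (fun t ht => sub_nonneg.2 (hhx t ht)) hm2⟩
  -- main case : a' < a
  set c := a - a' with hcdef
  have hc : 0 < c := by simp [hcdef]; linarith
  set f : ℝ → ℝ := fun r => Real.exp (a' * r) * (h r + (h r - x r)) with hf
  have hcexp : Continuous (fun r : ℝ => Real.exp (a' * r)) :=
    Real.continuous_exp.comp (continuous_const.mul continuous_id)
  have hfc : ContinuousOn f (Iic 0) :=
    hcexp.continuousOn.mul (hhc.add (hhc.sub hxcont))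
  have hMh0 : 0 ≤ Mh := (abs_nonneg _).trans (hMh 0 le_rfl)
  have hMx0 : 0 ≤ Mx := (abs_nonneg _).trans (hMx 0 le_rfl)
  have hfint : IntegrableOn f (Iic 0) := by
    refine Integrable.mono' ((expIntOn ha' 0).const_mul (2 * Mh + Mx))
      (hfc.aestronglyMeasurable measurableSet_Iic) ?_
    refine (ae_restrict_iff' measurableSet_Iic).2 (Filter.Eventually.of_forall ?_)
    intro r hr
    have hr0 : r ≤ 0 := hr
    have h1 := hMh r hr0
    have h2 := hMx r hr0
    have h3 : |h r + (h r - x r)| ≤ 2 * Mh + Mx := by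
      cases' abs_le.1 h1 with h1a h1b
      cases' abs_le.1 h2 with h2a h2b
      rw [abs_le]; constructor <;> linarith
    have : ‖f r‖ = Real.exp (a' * r) * |h r + (h r - x r)| := by
      rw [hf]; simp [abs_mul, abs_of_pos (Real.exp_pos _)]
    rw [this]
    calc Real.exp (a' * r) * |h r + (h r - x r)| ≤ Real.exp (a' * r) * (2 * Mh + Mx) :=
          mul_le_mul_of_nonneg_left h3 (Real.exp_pos _).le
      _ = (2 * Mh + Mx) * Real.exp (a' * r) := by ring
  have hfint' : ∀ t ≤ (0 : ℝ), IntegrableOn f (Iic t) :=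
    fun t ht => hfint.mono_set (Iic_subset_Iic.2 ht)
  set I : ℝ → ℝ := fun t => ∫ r in Iic t, f r with hI
  have hfpos : ∀ r ≤ (0 : ℝ), 0 ≤ f r := by
    intro r hr
    have := hh0 r hr
    have := hhx r hr
    apply mul_nonneg (Real.exp_pos _).le
    linarith
  have hInn : ∀ t ≤ (0 : ℝ), 0 ≤ I t := by
    intro t ht
    exact setIntegral_nonneg measurableSet_Iic (fun r hr => hfpos r ((mem_Iic.1 hr).trans ht))
  have hIle : ∀ t ≤ (0 : ℝ), I t ≤ (2 * Mh + Mx) * (Real.exp (a' * t) / a') := by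
    intro t ht
    have hb : ∀ r ∈ Iic t, f r ≤ (2 * Mh + Mx) * Real.exp (a' * r) := by
      intro r hr
      have hr0 : r ≤ 0 := (mem_Iic.1 hr).trans ht
      have h1 := hMh r hr0
      have h2 := hMx r hr0
      have h3 : h r + (h r - x r) ≤ 2 * Mh + Mx := by
        cases' abs_le.1 h1 with h1a h1b
        cases' abs_le.1 h2 with h2a h2b
        linarith
      calc f r = Real.exp (a' * r) * (h r + (h r - x r)) := rfl
        _ ≤ Real.exp (a' * r) * (2 * Mh + Mx) :=
            mul_le_mul_of_nonneg_left h3 (Real.exp_pos _).le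
        _ = (2 * Mh + Mx) * Real.exp (a' * r) := by ring
    calc I t ≤ ∫ r in Iic t, (2 * Mh + Mx) * Real.exp (a' * r) :=
          setIntegral_mono_on (hfint' t ht) ((expIntOn ha' t).const_mul _)
            measurableSet_Iic hb
      _ = (2 * Mh + Mx) * ∫ r in Iic t, Real.exp (a' * r) := integral_const_mul _ _
      _ = (2 * Mh + Mx) * (Real.exp (a' * t) / a') := by rw [expIicVal ha']
  set h' : ℝ → ℝ := fun t => h t + c * (Real.exp (-(a' * t)) * I t) with hh'
  -- continuity
  have hIc : ContinuousOn I (Iic 0) := by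
    have key : ∀ t ∈ Iic (0 : ℝ), I t = I 0 + ∫ r in (0 : ℝ)..t, f r := by
      intro t ht
      have := intervalIntegral.integral_Iic_sub_Iic hfint (hfint' t ht)
      simp only [hI]
      linarith [this]
    rw [continuousOn_congr key]
    apply continuousOn_const.add
    intro t₀ ht₀
    have ht₀' : t₀ ≤ 0 := ht₀
    have hprim : ContinuousWithinAt (fun b => ∫ r in (0 : ℝ)..b, f r) (Icc (t₀ - 1) 0) t₀ := by
      apply intervalIntegral.continuousWithinAt_primitive (measure_singleton t₀)
      have hmin : min (0 : ℝ) (t₀ - 1) = t₀ - 1 := min_eq_right (by linarith)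
      have hmax : max (0 : ℝ) (0 : ℝ) = 0 := max_self _
      rw [hmin, hmax, intervalIntegrable_iff_integrableOn_Ioc_of_le (by linarith)]
      exact hfint.mono_set (fun r hr => hr.2)
    apply hprim.mono_of_mem_nhdsWithin
    rw [mem_nhdsWithin]
    exact ⟨Ioi (t₀ - 1), isOpen_Ioi, by simp, fun y hy => ⟨hy.1.le, hy.2⟩⟩
  have hh'c : ContinuousOn h' (Iic 0) := by
    apply hhc.add
    apply continuousOn_const.mul
    exact ((Real.continuous_exp.comp (continuous_const.mul continuous_id).neg).continuousOn).mul hIc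
  -- boundedness
  have hexpmul : ∀ t : ℝ, Real.exp (-(a' * t)) * Real.exp (a' * t) = 1 := by
    intro t; rw [← Real.exp_add]; simp
  have hterm : ∀ t ≤ (0 : ℝ), 0 ≤ Real.exp (-(a' * t)) * I t := by
    intro t ht; exact mul_nonneg (Real.exp_pos _).le (hInn t ht)
  have htermle : ∀ t ≤ (0 : ℝ), Real.exp (-(a' * t)) * I t ≤ (2 * Mh + Mx) / a' := by
    intro t ht
    have h1 := hIle t ht
    have h2 : Real.exp (-(a' * t)) * I t ≤
        Real.exp (-(a' * t)) * ((2 * Mh + Mx) * (Real.exp (a' * t) / a')) :=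
      mul_le_mul_of_nonneg_left h1 (Real.exp_pos _).le
    have h3 : Real.exp (-(a' * t)) * ((2 * Mh + Mx) * (Real.exp (a' * t) / a')) =
        (2 * Mh + Mx) / a' := by
      have := hexpmul t
      field_simp
      nlinarith [hexpmul t]
    linarith
  have hbdd : ∀ t ≤ (0 : ℝ), |h' t| ≤ Mh + c * ((2 * Mh + Mx) / a') := by
    intro t ht
    have h1 := hMh t ht
    have h2 := hterm t ht
    have h3 := htermle t ht
    have h4 : |h' t| ≤ |h t| + |c * (Real.exp (-(a' * t)) * I t)| := abs_add_le _ _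
    have h5 : |c * (Real.exp (-(a' * t)) * I t)| = c * (Real.exp (-(a' * t)) * I t) :=
      abs_of_nonneg (mul_nonneg hc.le h2)
    have h6 : c * (Real.exp (-(a' * t)) * I t) ≤ c * ((2 * Mh + Mx) / a') :=
      mul_le_mul_of_nonneg_left h3 hc.le
    calc |h' t| ≤ |h t| + |c * (Real.exp (-(a' * t)) * I t)| := h4
      _ ≤ Mh + c * ((2 * Mh + Mx) / a') := by rw [h5]; linarith
  -- nonnegativity and domination
  have hh'0 : ∀ t ≤ (0 : ℝ), 0 ≤ h' t := by
    intro t ht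
    have := hh0 t ht
    have := hterm t ht
    have : 0 ≤ c * (Real.exp (-(a' * t)) * I t) := mul_nonneg hc.le (hterm t ht)
    simp only [hh']
    linarith [hh0 t ht]
  have hh'x : ∀ t ≤ (0 : ℝ), x t ≤ h' t := by
    intro t ht
    have h1 := hhx t ht
    have h2 : 0 ≤ c * (Real.exp (-(a' * t)) * I t) := mul_nonneg hc.le (hterm t ht)
    simp only [hh']
    linarith
  -- key rewriting
  have hrw : ∀ u : ℝ, Real.exp (a' * u) * h' u = Real.exp (a' * u) * h u + c * I u := by
    intro u
    simp only [hh', Real.exp_neg]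
    field_simp
  refine ⟨h', hh'c, ⟨Mh + c * ((2 * Mh + Mx) / a'), hbdd⟩, hh'0, ?_, hh'x, ?_⟩
  · intro s hs t ht hst
    simp only
    rw [hrw s, hrw t]
    exact mainMono hlt hh0 (fun r hr => sub_nonneg.2 (hhx r hr)) hhc (hhc.sub hxcont)
      hm1 (fun r => rfl) hfint hs ht hst
  · intro s hs t ht hst
    simp only
    have hrw2 : ∀ u : ℝ, Real.exp (a' * u) * (h' u - x u) =
        Real.exp (a' * u) * (h u - x u) + c * I u := by
      intro u
      calc Real.exp (a' * u) * (h' u - x u)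
          = Real.exp (a' * u) * h' u - Real.exp (a' * u) * x u := by ring
        _ = (Real.exp (a' * u) * h u + c * I u) - Real.exp (a' * u) * x u := by rw [hrw u]
        _ = Real.exp (a' * u) * (h u - x u) + c * I u := by ring
    rw [hrw2 s, hrw2 t]
    exact mainMono hlt (fun r hr => sub_nonneg.2 (hhx r hr)) hh0 (hhc.sub hxcont) hhc
      hm2 (fun r => by rw [hf]; ring) hfint hs ht hst
end

section
/- Let $a>0$ and let $x_0:(-\infty,0]\to\mathbb{R}$ be a bounded continuous function with $\sup_{k\geq 1}V_{[-k,-k+1]}(x_0)<\infty$. Then there exists a bounded continuous function $h_0:(-\infty,0]\to\mathbb{R}$ such that, for $A=(-a)$, $h_0\geq_A 0$, $h_0\geq_A x_0$, and $h_0\geq_A x_0 - x_0(0)$, where $x_0(0)$ denotes the constant function with value $x_0(0)$. -/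
open Set

open Set ENNReal MeasureTheory Filter Real Topology

lemma aux_right_small (f : ℝ → ℝ) (a b : ℝ) (hab : a < b)
    (hfin : eVariationOn f (Icc a b) ≠ ⊤)
    (hcont : ContinuousWithinAt f (Icc a b) a) {ε : ℝ} (hε : 0 < ε) :
    ∃ w, w ∈ Ioc a b ∧ eVariationOn f (Icc a w) ≤ ENNReal.ofReal ε := by
  by_cases hTs : eVariationOn f (Icc a b) ≤ ENNReal.ofReal ε
  · exact ⟨b, ⟨hab, le_rfl⟩, hTs⟩
  push_neg at hTs
  have hε4 : (0:ℝ) < ε/4 := by linarith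
  have hε4' : (0:ℝ≥0∞) < ENNReal.ofReal (ε/4) := ENNReal.ofReal_pos.2 hε4
  have hT0 : eVariationOn f (Icc a b) ≠ 0 := by
    intro h; rw [h] at hTs; simp at hTs
  -- a partition almost achieving T
  have hlt : eVariationOn f (Icc a b) - ENNReal.ofReal (ε/4) <
      ⨆ p : ℕ × {u : ℕ → ℝ // Monotone u ∧ ∀ i, u i ∈ Icc a b},
        ∑ i ∈ Finset.range p.1, edist (f (p.2.1 (i+1))) (f (p.2.1 i)) := by
    rw [← eVariationOn]
    exact ENNReal.sub_lt_self hfin hT0 hε4'.ne'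
  obtain ⟨⟨n, u, hu, us⟩, hp⟩ := lt_iSup_iff.1 hlt
  simp only at hp
  -- T < S + ε/4
  have hTS : eVariationOn f (Icc a b) <
      (∑ i ∈ Finset.range n, edist (f (u (i+1))) (f (u i))) + ENNReal.ofReal (ε/4) := by
    calc eVariationOn f (Icc a b)
        = eVariationOn f (Icc a b) - ENNReal.ofReal (ε/4) + ENNReal.ofReal (ε/4) := by
          rw [tsub_add_cancel_of_le (le_trans (ENNReal.ofReal_le_ofReal (by linarith)) hTs.le)]
      _ < _ := by exact ENNReal.add_lt_add_right ENNReal.ofReal_ne_top hp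
  -- continuity at a
  have hrex : ∃ r, a < r ∧ r ≤ b ∧ ∀ y ∈ Icc a b, y ≤ r →
      edist (f y) (f a) ≤ ENNReal.ofReal (ε/4) := by
    rw [Metric.continuousWithinAt_iff] at hcont
    obtain ⟨δ, hδ, hd⟩ := hcont (ε/4) hε4
    refine ⟨min (a + δ/2) b, lt_min (by linarith) hab, min_le_right _ _, ?_⟩
    intro y hy hyr
    rw [edist_dist]
    apply ENNReal.ofReal_le_ofReal
    refine (hd hy ?_).le
    rw [Real.dist_eq, abs_of_nonneg (by linarith [hy.1])]
    have := le_trans hyr (min_le_left _ _)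
    linarith
  obtain ⟨r, har, hrb, hr⟩ := hrex
  by_cases hall : ∀ i, i ≤ n → ¬ a < u i
  · -- the sum is 0; contradiction
    have hS0 : ∑ i ∈ Finset.range n, edist (f (u (i+1))) (f (u i)) = 0 :=
      Finset.sum_eq_zero (fun i hi => by
        have hin := Finset.mem_range.1 hi
        have h1 : u i = a := le_antisymm (not_lt.1 (hall i (by omega))) (us i).1
        have h2 : u (i+1) = a := le_antisymm (not_lt.1 (hall (i+1) (by omega))) (us (i+1)).1
        rw [h1, h2, edist_self])
    rw [hS0, zero_add] at hTS
    exact absurd hTs (hTS.trans_le (ENNReal.ofReal_le_ofReal (q := ε) (by linarith))).le.not_gt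
  push_neg at hall
  obtain ⟨i₀, hi₀n, hi₀⟩ := hall
  have hex : ∃ j, a < u j := ⟨i₀, hi₀⟩
  set j := Nat.find hex with hjdef
  have hja : a < u j := Nat.find_spec hex
  have hjmin : ∀ i, i < j → u i = a := fun i hi =>
    le_antisymm (not_lt.1 (Nat.find_min hex hi)) (us i).1
  have hjn : j ≤ n := le_trans (Nat.find_min' hex hi₀) hi₀n
  set w := min (u j) r with hwdef
  have haw : a < w := lt_min hja har
  have hwb : w ≤ b := le_trans (min_le_right _ _) hrb
  have hwr : w ≤ r := min_le_right _ _
  have hwj : w ≤ u j := min_le_left _ _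
  have hfw : edist (f w) (f a) ≤ ENNReal.ofReal (ε/4) := hr w ⟨haw.le, hwb⟩ hwr
  -- new partition of [w, b]
  set v : ℕ → ℝ := fun i => if i = 0 then w else u (j + i - 1) with hvdef
  have hv0 : v 0 = w := rfl
  have hvs : ∀ i, v (i+1) = u (j + i) := fun i => by
    have h1 : j + (i+1) - 1 = j + i := by omega
    simp only [hvdef, if_neg (Nat.succ_ne_zero i), h1]
  have hvmono : Monotone v := monotone_nat_of_le_succ (fun i => by
    cases i with
    | zero => rw [hv0, hvs]; simpa using hwj
    | succ i => rw [hvs, hvs]; exact hu (by omega))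
  have hvmem : ∀ i, v i ∈ Icc w b := fun i => by
    cases i with
    | zero => exact ⟨le_rfl, hwb⟩
    | succ i => rw [hvs]; exact ⟨le_trans hwj (hu (Nat.le_add_right _ _)), (us _).2⟩
  have hvsum := eVariationOn.sum_le (f := f) (n := n - j + 1) hvmono hvmem
  rw [Finset.sum_range_succ'] at hvsum
  have hassoc : ∀ i : ℕ, j + (i+1) = j + i + 1 := fun i => by omega
  simp only [hvs, hv0, hassoc, Nat.add_zero] at hvsum
  have hnew : (∑ i ∈ Finset.range (n - j), edist (f (u (j + i + 1))) (f (u (j + i))))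
      + edist (f (u j)) (f w) ≤ eVariationOn f (Icc w b) := hvsum
  -- prefix bound
  have hpre : (∑ i ∈ Finset.range j, edist (f (u (i+1))) (f (u i)))
      ≤ edist (f (u j)) (f w) + ENNReal.ofReal (ε/4) := by
    rcases Nat.eq_zero_or_pos j with hj0 | hjpos
    · rw [hj0]; simp
    · obtain ⟨j', hjj'⟩ : ∃ j', j = j' + 1 := ⟨j - 1, by omega⟩
      rw [hjj', Finset.sum_range_succ]
      have h0 : ∑ i ∈ Finset.range j', edist (f (u (i+1))) (f (u i)) = 0 :=
        Finset.sum_eq_zero (fun i hi => by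
          have hin := Finset.mem_range.1 hi
          rw [hjmin i (by omega), hjmin (i+1) (by omega), edist_self])
      rw [h0, zero_add, hjmin j' (by omega)]
      calc edist (f (u (j'+1))) (f a)
          ≤ edist (f (u (j'+1))) (f w) + edist (f w) (f a) := edist_triangle _ _ _
        _ ≤ _ := by
            rw [← hjj']
            exact add_le_add_right hfw _
  -- split the original sum
  have hsplit : (∑ i ∈ Finset.range n, edist (f (u (i+1))) (f (u i)))
      = (∑ i ∈ Finset.range j, edist (f (u (i+1))) (f (u i)))
        + ∑ i ∈ Finset.range (n - j), edist (f (u (j+i+1))) (f (u (j+i))) := by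
    rw [← Finset.sum_range_add_sum_Ico _ hjn]
    congr 1
    rw [Finset.sum_Ico_eq_sum_range]
  refine ⟨w, ⟨haw, hwb⟩, ?_⟩
  have hfinwb : eVariationOn f (Icc w b) ≠ ⊤ :=
    ne_top_of_le_ne_top hfin (eVariationOn.mono f (Icc_subset_Icc haw.le le_rfl))
  have hadd : eVariationOn f (Icc a w) + eVariationOn f (Icc w b)
      = eVariationOn f (Icc a b) := by
    have := eVariationOn.Icc_add_Icc f (s := univ) haw.le hwb (mem_univ w)
    simpa [univ_inter] using this
  have hchain : eVariationOn f (Icc w b) + eVariationOn f (Icc a w)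
      < eVariationOn f (Icc w b) + (ENNReal.ofReal (ε/4) + ENNReal.ofReal (ε/4)) := by
    rw [add_comm (eVariationOn f (Icc w b)), hadd]
    calc eVariationOn f (Icc a b)
        < (∑ i ∈ Finset.range n, edist (f (u (i+1))) (f (u i))) + ENNReal.ofReal (ε/4) := hTS
      _ = ((∑ i ∈ Finset.range j, edist (f (u (i+1))) (f (u i)))
            + ∑ i ∈ Finset.range (n - j), edist (f (u (j+i+1))) (f (u (j+i))))
            + ENNReal.ofReal (ε/4) := by rw [hsplit]
      _ ≤ ((edist (f (u j)) (f w) + ENNReal.ofReal (ε/4))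
            + ∑ i ∈ Finset.range (n - j), edist (f (u (j+i+1))) (f (u (j+i))))
            + ENNReal.ofReal (ε/4) := by gcongr
      _ = ((∑ i ∈ Finset.range (n - j), edist (f (u (j+i+1))) (f (u (j+i))))
            + edist (f (u j)) (f w)) + (ENNReal.ofReal (ε/4) + ENNReal.ofReal (ε/4)) := by
            ring
      _ ≤ eVariationOn f (Icc w b) + (ENNReal.ofReal (ε/4) + ENNReal.ofReal (ε/4)) := by
            gcongr
  have hlt2 : eVariationOn f (Icc a w) < ENNReal.ofReal (ε/4) + ENNReal.ofReal (ε/4) :=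
    (ENNReal.add_lt_add_iff_left hfinwb).1 hchain
  calc eVariationOn f (Icc a w)
      ≤ ENNReal.ofReal (ε/4) + ENNReal.ofReal (ε/4) := hlt2.le
    _ = ENNReal.ofReal (ε/4 + ε/4) := (ENNReal.ofReal_add (by positivity) (by positivity)).symm
    _ ≤ ENNReal.ofReal ε := ENNReal.ofReal_le_ofReal (by linarith)

lemma aux_left_small (f : ℝ → ℝ) (a b : ℝ) (hab : a < b)
    (hfin : eVariationOn f (Icc a b) ≠ ⊤)
    (hcont : ContinuousWithinAt f (Icc a b) b) {ε : ℝ} (hε : 0 < ε) :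
    ∃ w, w ∈ Ico a b ∧ eVariationOn f (Icc w b) ≤ ENNReal.ofReal ε := by
  have hanti : AntitoneOn (fun x : ℝ => -x) (Icc (-b) (-a)) := fun x _ y _ hxy => by
    simpa using hxy
  have himg' : ∀ s t : ℝ, (fun x : ℝ => -x) '' Icc s t = Icc (-t) (-s) := fun s t => by
    ext x
    constructor
    · rintro ⟨y, hy, rfl⟩
      simp only [mem_Icc] at hy ⊢
      constructor <;> linarith
    · intro hx
      simp only [mem_Icc] at hx
      exact ⟨-x, by simp only [mem_Icc]; constructor <;> linarith, neg_neg x⟩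
  have hvar_eq : ∀ s t : ℝ, -b ≤ s → t ≤ -a → s ≤ t →
      eVariationOn (fun x => f (-x)) (Icc s t) = eVariationOn f (Icc (-t) (-s)) := by
    intro s t hs ht hst
    have hanti' : AntitoneOn (fun x : ℝ => -x) (Icc s t) := fun x _ y _ hxy => by simpa using hxy
    have := eVariationOn.comp_eq_of_antitoneOn f (fun x : ℝ => -x) hanti'
    rw [himg'] at this
    exact this
  have hfin' : eVariationOn (fun x => f (-x)) (Icc (-b) (-a)) ≠ ⊤ := by
    rw [hvar_eq _ _ le_rfl le_rfl (by linarith)]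
    simpa using hfin
  have hcont' : ContinuousWithinAt (fun x => f (-x)) (Icc (-b) (-a)) (-b) := by
    have hmaps : MapsTo (fun x : ℝ => -x) (Icc (-b) (-a)) (Icc a b) := fun x hx => by
      simp only [mem_Icc] at hx ⊢
      constructor <;> linarith
    have := ContinuousWithinAt.comp (by simpa using hcont)
      (continuous_neg.continuousWithinAt (x := (-b : ℝ))) hmaps
    exact this
  obtain ⟨w', hw', hvw⟩ := aux_right_small (fun x => f (-x)) (-b) (-a) (by linarith)
    hfin' hcont' hε
  refine ⟨-w', ⟨by linarith [hw'.2], by linarith [hw'.1]⟩, ?_⟩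
  rw [hvar_eq _ _ le_rfl hw'.2 hw'.1.le] at hvw
  simpa using hvw

section
variable (x₀ : ℝ → ℝ) (cm : ℝ)

-- variation over arbitrary unit intervals in Iic 0
lemma unit_bound (hcm : 0 ≤ cm)
    (hvar : ∀ k : ℕ, 1 ≤ k → eVariationOn x₀ (Icc (-(k:ℝ)) (-(k:ℝ) + 1)) ≤ ENNReal.ofReal cm)
    {u : ℝ} (hu : u + 1 ≤ 0) :
    eVariationOn x₀ (Icc u (u + 1)) ≤ ENNReal.ofReal (2 * cm) := by
  set k : ℕ := ⌊-u⌋₊ with hk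
  have hu1 : (1:ℝ) ≤ -u := by linarith
  have hk1 : 1 ≤ k := by
    rw [hk]
    exact Nat.le_floor (by push_cast; linarith)
  have hkle : (k:ℝ) ≤ -u := Nat.floor_le (by linarith)
  have hklt : -u < (k:ℝ) + 1 := Nat.lt_floor_add_one _
  have hsub : Icc u (u+1) ⊆ Icc (-(↑(k+1):ℝ)) (-(k:ℝ) + 1) := by
    apply Icc_subset_Icc
    · push_cast; linarith
    · linarith
  have hsplit := eVariationOn.Icc_add_Icc x₀ (s := univ)
    (a := (-(↑(k+1):ℝ))) (b := (-(k:ℝ))) (c := (-(k:ℝ) + 1))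
    (by push_cast; linarith) (by linarith) (mem_univ _)
  simp only [univ_inter] at hsplit
  calc eVariationOn x₀ (Icc u (u+1)) ≤ eVariationOn x₀ (Icc (-(↑(k+1):ℝ)) (-(k:ℝ) + 1)) :=
        eVariationOn.mono x₀ hsub
    _ = eVariationOn x₀ (Icc (-(↑(k+1):ℝ)) (-(k:ℝ)))
        + eVariationOn x₀ (Icc (-(k:ℝ)) (-(k:ℝ) + 1)) := hsplit.symm
    _ ≤ ENNReal.ofReal cm + ENNReal.ofReal cm := by
        gcongr
        · have := hvar (k+1) (by omega)
          convert this using 3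
          · rfl
          · push_cast; ring
        · exact hvar k hk1
    _ = ENNReal.ofReal (2 * cm) := by
        rw [← ENNReal.ofReal_add hcm hcm]; congr 1; ring

lemma span_bound (hcm : 0 ≤ cm)
    (hvar : ∀ k : ℕ, 1 ≤ k → eVariationOn x₀ (Icc (-(k:ℝ)) (-(k:ℝ) + 1)) ≤ ENNReal.ofReal cm) :
    ∀ n : ℕ, ∀ r t : ℝ, r ≤ t → t ≤ 0 → t - r ≤ n + 1 →
      eVariationOn x₀ (Icc r t) ≤ ENNReal.ofReal ((n + 1) * (2 * cm)) := by
  intro n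
  induction n with
  | zero =>
    intro r t hrt ht hspan
    push_cast at hspan ⊢
    have hsub : Icc r t ⊆ Icc (t-1) ((t-1)+1) := Icc_subset_Icc (by linarith) (by linarith)
    calc eVariationOn x₀ (Icc r t) ≤ eVariationOn x₀ (Icc (t-1) ((t-1)+1)) :=
          eVariationOn.mono x₀ hsub
      _ ≤ ENNReal.ofReal (2 * cm) := unit_bound x₀ cm hcm hvar (by linarith)
      _ ≤ ENNReal.ofReal ((0 + 1) * (2*cm)) := ENNReal.ofReal_le_ofReal (by nlinarith)
  | succ n ih =>
    intro r t hrt ht hspan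
    push_cast at hspan ⊢
    by_cases hcase : t - r ≤ (n:ℝ) + 1
    · refine le_trans (ih r t hrt ht hcase) (ENNReal.ofReal_le_ofReal ?_)
      have : (0:ℝ) ≤ 2 * cm := by linarith
      nlinarith [Nat.cast_nonneg (α := ℝ) n]
    · push_neg at hcase
      have hr1t : r + 1 ≤ t := by linarith
      have hsplit := eVariationOn.Icc_add_Icc x₀ (s := univ)
        (a := r) (b := r+1) (c := t) (by linarith) hr1t (mem_univ _)
      simp only [univ_inter] at hsplit
      calc eVariationOn x₀ (Icc r t)
          = eVariationOn x₀ (Icc r (r+1)) + eVariationOn x₀ (Icc (r+1) t) := hsplit.symm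
        _ ≤ ENNReal.ofReal (2*cm) + ENNReal.ofReal ((n+1) * (2*cm)) := by
            gcongr
            · exact unit_bound x₀ cm hcm hvar (by linarith)
            · exact ih (r+1) t hr1t ht (by linarith)
        _ = ENNReal.ofReal (((n:ℝ)+1+1) * (2*cm)) := by
            rw [← ENNReal.ofReal_add (by linarith) (by positivity)]
            congr 1; push_cast; ring

end

noncomputable def Vv (x₀ : ℝ → ℝ) (t : ℝ) : ℝ := (eVariationOn x₀ (Icc t 0)).toReal

section
variable (x₀ : ℝ → ℝ) (cm : ℝ)

lemma var_le (hcm : 0 ≤ cm)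
    (hvar : ∀ k : ℕ, 1 ≤ k → eVariationOn x₀ (Icc (-(k:ℝ)) (-(k:ℝ) + 1)) ≤ ENNReal.ofReal cm)
    {r t : ℝ} (hrt : r ≤ t) (ht : t ≤ 0) :
    eVariationOn x₀ (Icc r t) ≤ ENNReal.ofReal ((t - r + 2) * (2 * cm)) := by
  set n : ℕ := ⌈t - r⌉₊ with hn
  have h1 : t - r ≤ (n:ℝ) + 1 := le_trans (Nat.le_ceil _) (by linarith)
  have h2 : (n:ℝ) < (t - r) + 1 := Nat.ceil_lt_add_one (by linarith)
  refine le_trans (span_bound x₀ cm hcm hvar n r t hrt ht h1) (ENNReal.ofReal_le_ofReal ?_)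
  nlinarith

lemma var_ne_top (hcm : 0 ≤ cm)
    (hvar : ∀ k : ℕ, 1 ≤ k → eVariationOn x₀ (Icc (-(k:ℝ)) (-(k:ℝ) + 1)) ≤ ENNReal.ofReal cm)
    {r t : ℝ} (hrt : r ≤ t) (ht : t ≤ 0) : eVariationOn x₀ (Icc r t) ≠ ⊤ :=
  ne_top_of_le_ne_top ENNReal.ofReal_ne_top (var_le x₀ cm hcm hvar hrt ht)

lemma wv_le (hcm : 0 ≤ cm)
    (hvar : ∀ k : ℕ, 1 ≤ k → eVariationOn x₀ (Icc (-(k:ℝ)) (-(k:ℝ) + 1)) ≤ ENNReal.ofReal cm)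
    {r t : ℝ} (hrt : r ≤ t) (ht : t ≤ 0) :
    (eVariationOn x₀ (Icc r t)).toReal ≤ (t - r + 2) * (2 * cm) :=
  ENNReal.toReal_le_of_le_ofReal (by nlinarith) (var_le x₀ cm hcm hvar hrt ht)

lemma Vv_add (hcm : 0 ≤ cm)
    (hvar : ∀ k : ℕ, 1 ≤ k → eVariationOn x₀ (Icc (-(k:ℝ)) (-(k:ℝ) + 1)) ≤ ENNReal.ofReal cm)
    {s t : ℝ} (hst : s ≤ t) (ht : t ≤ 0) :
    Vv x₀ s = (eVariationOn x₀ (Icc s t)).toReal + Vv x₀ t := by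
  have hsplit := eVariationOn.Icc_add_Icc x₀ (s := univ) (a := s) (b := t) (c := 0) hst ht
    (mem_univ _)
  simp only [univ_inter] at hsplit
  rw [Vv, Vv, ← hsplit, ENNReal.toReal_add (var_ne_top x₀ cm hcm hvar hst ht)
    (var_ne_top x₀ cm hcm hvar ht le_rfl)]

lemma Vv_nonneg (t : ℝ) : 0 ≤ Vv x₀ t := ENNReal.toReal_nonneg

lemma xdiff_le {s t : ℝ} (hst : s ≤ t)
    (hfin : eVariationOn x₀ (Icc s t) ≠ ⊤) :
    |x₀ s - x₀ t| ≤ (eVariationOn x₀ (Icc s t)).toReal := by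
  have h := eVariationOn.edist_le x₀ (s := Icc s t) (x := s) (y := t)
    ⟨le_rfl, hst⟩ ⟨hst, le_rfl⟩
  have h2 : edist (x₀ s) (x₀ t) = ENNReal.ofReal |x₀ s - x₀ t| := by
    rw [edist_dist, Real.dist_eq]
  rw [h2] at h
  calc |x₀ s - x₀ t| = (ENNReal.ofReal |x₀ s - x₀ t|).toReal := by
        rw [ENNReal.toReal_ofReal (abs_nonneg _)]
    _ ≤ _ := ENNReal.toReal_mono hfin h

lemma Vv_anti (hcm : 0 ≤ cm)
    (hvar : ∀ k : ℕ, 1 ≤ k → eVariationOn x₀ (Icc (-(k:ℝ)) (-(k:ℝ) + 1)) ≤ ENNReal.ofReal cm)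
    {s t : ℝ} (hst : s ≤ t) : Vv x₀ t ≤ Vv x₀ s := by
  by_cases ht : t ≤ 0
  · rw [Vv_add x₀ cm hcm hvar hst ht]
    have := ENNReal.toReal_nonneg (a := eVariationOn x₀ (Icc s t))
    linarith
  · push_neg at ht
    have : Icc t 0 = ∅ := Icc_eq_empty (by linarith)
    rw [Vv, this]
    have : eVariationOn x₀ (∅ : Set ℝ) = 0 := by
      apply eVariationOn.subsingleton
      exact subsingleton_empty
    rw [this]
    simpa using Vv_nonneg x₀ s

lemma Vv_cont (hcm : 0 ≤ cm)
    (hvar : ∀ k : ℕ, 1 ≤ k → eVariationOn x₀ (Icc (-(k:ℝ)) (-(k:ℝ) + 1)) ≤ ENNReal.ofReal cm)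
    (hcont : ContinuousOn x₀ (Iic 0)) : ContinuousOn (Vv x₀) (Iic 0) := by
  intro t₀ ht₀
  rw [Metric.continuousWithinAt_iff]
  intro ε hε
  have hε2 : 0 < ε/2 := by linarith
  -- generic step
  have hkey : ∀ s t : ℝ, s ≤ t → t ≤ 0 → eVariationOn x₀ (Icc s t) ≤ ENNReal.ofReal (ε/2) →
      dist (Vv x₀ s) (Vv x₀ t) < ε := by
    intro s t hst ht hsmall
    rw [Real.dist_eq, Vv_add x₀ cm hcm hvar hst ht]
    have h1 : (eVariationOn x₀ (Icc s t)).toReal ≤ ε/2 :=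
      ENNReal.toReal_le_of_le_ofReal hε2.le hsmall
    have h2 : (0:ℝ) ≤ (eVariationOn x₀ (Icc s t)).toReal := ENNReal.toReal_nonneg
    rw [abs_of_nonneg (by linarith)]
    linarith
  obtain ⟨wL, hwL, hL⟩ := aux_left_small x₀ (t₀-1) t₀ (by linarith)
    (var_ne_top x₀ cm hcm hvar (by linarith) ht₀)
    ((hcont t₀ ht₀).mono (fun y hy => le_trans hy.2 ht₀)) hε2
  rcases lt_or_eq_of_le (mem_Iic.1 ht₀) with ht₀' | ht₀'
  · obtain ⟨wR, hwR, hR⟩ := aux_right_small x₀ t₀ 0 ht₀'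
      (var_ne_top x₀ cm hcm hvar ht₀ le_rfl)
      ((hcont t₀ ht₀).mono (fun y hy => hy.2)) hε2
    refine ⟨min (t₀ - wL) (wR - t₀), by
      apply lt_min <;> [linarith [hwL.2]; linarith [hwR.1]], ?_⟩
    intro u hu hdist
    rw [Real.dist_eq] at hdist
    rcases le_total u t₀ with huc | huc
    · refine hkey u t₀ huc ht₀ (le_trans (eVariationOn.mono x₀ (Icc_subset_Icc ?_ le_rfl)) hL)
      have h3 := abs_lt.1 hdist
      have := min_le_left (t₀ - wL) (wR - t₀)
      linarith [h3.1]
    · rw [dist_comm]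
      refine hkey t₀ u huc hu (le_trans (eVariationOn.mono x₀ (Icc_subset_Icc le_rfl ?_)) hR)
      have h3 := abs_lt.1 hdist
      have := min_le_right (t₀ - wL) (wR - t₀)
      linarith [h3.2]
  · -- t₀ = 0
    refine ⟨t₀ - wL, by linarith [hwL.2], ?_⟩
    intro u hu hdist
    rw [Real.dist_eq] at hdist
    have huc : u ≤ t₀ := by rw [ht₀']; exact hu
    refine hkey u t₀ huc ht₀ (le_trans (eVariationOn.mono x₀ (Icc_subset_Icc ?_ le_rfl)) hL)
    have h3 := abs_lt.1 hdist
    linarith [h3.1]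

end

-- exp(b r) integrable on Iic t
lemma expIic {b : ℝ} (hb : 0 < b) (t : ℝ) :
    IntegrableOn (fun r => Real.exp (b * r)) (Iic t) := by
  have h_int : IntegrableOn (fun x => Real.exp (b * (-x))) (Ici (-t)) := by
    rw [integrableOn_Ici_iff_integrableOn_Ioi]
    exact (exp_neg_integrableOn_Ioi (-t) hb).congr_fun
      (fun x _ => by congr 1; ring) measurableSet_Ioi
  have h_map : (volume.restrict (Ici (-t))).map Neg.neg = volume.restrict (Iic t) := by
    conv_rhs => rw [← Measure.map_neg_eq_self (volume : Measure ℝ),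
      MeasurableEmbedding.restrict_map measurableEmbedding_neg]
    congr 1
    ext x
    simp
  rw [IntegrableOn, ← h_map, measurableEmbedding_neg.integrable_map_iff]
  exact h_int

-- limit: r * exp (b r) → 0 at -∞
lemma tendsto_mul_exp_atBot {b : ℝ} (hb : 0 < b) :
    Tendsto (fun r => r * Real.exp (b * r)) atBot (𝓝 0) := by
  have h1 : Tendsto (fun x : ℝ => -(x / b) * Real.exp (-x)) atTop (𝓝 0) := by
    have := Real.tendsto_pow_mul_exp_neg_atTop_nhds_zero 1
    simp only [pow_one] at this
    have h2 := this.div_const b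
    simpa [neg_div, div_mul_eq_mul_div, neg_mul] using h2.neg
  have h3 : Tendsto (fun r : ℝ => -(b * r)) atBot atTop := by
    apply Filter.tendsto_neg_atBot_atTop.comp
    exact (tendsto_const_mul_atBot_of_pos hb).2 tendsto_id
  have h4 := h1.comp h3
  simp only [Function.comp_def] at h4
  refine h4.congr (fun r => ?_)
  field_simp

section
variable {a c₂ : ℝ} {V : ℝ → ℝ}
variable (ha : 0 < a) (hc₂ : 0 ≤ c₂) (hVanti : Antitone V) (hVnn : ∀ t, 0 ≤ V t)
  (hVbd : ∀ r t : ℝ, r ≤ t → t ≤ 0 → V r ≤ V t + (t - r + 2) * c₂)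

-- derivative of exp (a*r)
lemma hda (r : ℝ) : HasDerivAt (fun x => Real.exp (a * x)) (a * Real.exp (a * r)) r := by
  simpa [mul_comm] using ((hasDerivAt_id r).const_mul a).exp

include ha hc₂ hVnn in
lemma dom_bound {t : ℝ} (r : ℝ) (hrt : r ≤ t) :
    a * Real.exp (a * r) * (V t + (t - r + 2) * c₂)
      ≤ (a * (V t + 2*c₂ + 2*c₂/a) * Real.exp ((a/2) * t)) * Real.exp ((a/2) * r) := by
  have hu : 0 ≤ t - r := by linarith
  have h1 : 1 ≤ Real.exp ((a/2) * (t - r)) := Real.one_le_exp (by positivity)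
  have h2 : (a/2) * (t - r) ≤ Real.exp ((a/2) * (t - r)) := by
    nlinarith [Real.add_one_le_exp ((a/2) * (t - r))]
  have hVt := hVnn t
  have key : V t + (t - r + 2) * c₂ ≤ (V t + 2*c₂ + 2*c₂/a) * Real.exp ((a/2) * (t - r)) := by
    have h3 : (t - r) * c₂ ≤ (2*c₂/a) * Real.exp ((a/2) * (t - r)) := by
      rw [div_mul_eq_mul_div, le_div_iff₀ ha]
      nlinarith
    nlinarith
  have hexp : Real.exp (a * r) * Real.exp ((a/2) * (t - r))
      = Real.exp ((a/2) * t) * Real.exp ((a/2) * r) := by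
    rw [← Real.exp_add, ← Real.exp_add]
    congr 1
    ring
  calc a * Real.exp (a * r) * (V t + (t - r + 2) * c₂)
      ≤ a * Real.exp (a * r) * ((V t + 2*c₂ + 2*c₂/a) * Real.exp ((a/2) * (t - r))) := by
        apply mul_le_mul_of_nonneg_left key (by positivity)
    _ = (a * (V t + 2*c₂ + 2*c₂/a) * Real.exp ((a/2) * t)) * Real.exp ((a/2) * r) := by
        rw [show a * Real.exp (a * r) * ((V t + 2*c₂ + 2*c₂/a) * Real.exp ((a/2) * (t - r)))
          = a * (V t + 2*c₂ + 2*c₂/a) * (Real.exp (a * r) * Real.exp ((a/2) * (t - r))) from by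
            ring, hexp]
        ring

include ha hc₂ hVanti hVnn hVbd in
lemma psi_int {t : ℝ} (ht : t ≤ 0) :
    IntegrableOn (fun r => a * Real.exp (a * r) * V r) (Iic t) := by
  have hg : IntegrableOn (fun r =>
      (a * (V t + 2*c₂ + 2*c₂/a) * Real.exp ((a/2) * t)) * Real.exp ((a/2) * r)) (Iic t) :=
    (expIic (half_pos ha) t).const_mul _
  have hmeas : Measurable fun r : ℝ => a * Real.exp (a * r) * V r :=
    ((Real.measurable_exp.comp (measurable_id.const_mul a)).const_mul a).mul hVanti.measurable
  refine hg.mono' hmeas.aestronglyMeasurable ?_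
  rw [ae_restrict_iff' measurableSet_Iic]
  refine ae_of_all _ (fun r hr => ?_)
  have hr' : r ≤ t := hr
  have h0 : 0 ≤ a * Real.exp (a * r) * V r := by
    have := hVnn r; positivity
  rw [Real.norm_eq_abs, abs_of_nonneg h0]
  calc a * Real.exp (a * r) * V r ≤ a * Real.exp (a * r) * (V t + (t - r + 2) * c₂) := by
        apply mul_le_mul_of_nonneg_left (hVbd r t hr' ht) (by positivity)
    _ ≤ _ := dom_bound ha hc₂ hVnn r hr'

include ha hc₂ hVanti hVnn in
lemma dom_int {t : ℝ} (ht : t ≤ 0) :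
    IntegrableOn (fun r => a * Real.exp (a * r) * (V t + (t - r + 2) * c₂)) (Iic t) := by
  have hg : IntegrableOn (fun r =>
      (a * (V t + 2*c₂ + 2*c₂/a) * Real.exp ((a/2) * t)) * Real.exp ((a/2) * r)) (Iic t) :=
    (expIic (half_pos ha) t).const_mul _
  have hcontf : Continuous fun r : ℝ => a * Real.exp (a * r) * (V t + (t - r + 2) * c₂) := by
    continuity
  refine hg.mono' hcontf.aestronglyMeasurable ?_
  rw [ae_restrict_iff' measurableSet_Iic]
  refine ae_of_all _ (fun r hr => ?_)
  have hr' : r ≤ t := hr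
  have h0 : 0 ≤ a * Real.exp (a * r) * (V t + (t - r + 2) * c₂) := by
    have := hVnn t
    have : (0:ℝ) ≤ V t + (t - r + 2) * c₂ := by nlinarith
    positivity
  rw [Real.norm_eq_abs, abs_of_nonneg h0]
  exact dom_bound ha hc₂ hVnn r hr'

include ha in
lemma exp_int_Iic (t : ℝ) : ∫ r in Iic t, a * Real.exp (a * r) = Real.exp (a * t) := by
  have hder : ∀ x ∈ Iic t, HasDerivAt (fun x => Real.exp (a * x)) (a * Real.exp (a * x)) x :=
    fun x _ => hda x
  have hint : IntegrableOn (fun x => a * Real.exp (a * x)) (Iic t) :=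
    (expIic ha t).const_mul a
  have htend : Tendsto (fun x => Real.exp (a * x)) atBot (𝓝 0) :=
    Real.tendsto_exp_atBot.comp ((tendsto_const_mul_atBot_of_pos ha).2 tendsto_id)
  rw [MeasureTheory.integral_Iic_of_hasDerivAt_of_tendsto' hder hint htend, sub_zero]

include ha hc₂ hVanti hVnn in
lemma dom_integral {t : ℝ} (ht : t ≤ 0) :
    ∫ r in Iic t, a * Real.exp (a * r) * (V t + (t - r + 2) * c₂)
      = Real.exp (a * t) * (V t + 2*c₂ + c₂/a) := by
  set G : ℝ → ℝ := fun r => Real.exp (a * r) * (V t + (t - r + 2) * c₂)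
    + (c₂/a) * Real.exp (a * r) with hG
  have hder : ∀ x ∈ Iic t, HasDerivAt G (a * Real.exp (a * x) * (V t + (t - x + 2) * c₂)) x := by
    intro x _
    have h2 : HasDerivAt (fun r : ℝ => V t + (t - r + 2) * c₂) (-c₂) x := by
      have h3 : HasDerivAt (fun r : ℝ => t - r + 2) (-1) x := by
        simpa using ((hasDerivAt_id x).const_sub t).add_const 2
      simpa using (h3.mul_const c₂).const_add (V t)
    have h4 := ((hda (a := a) x).mul h2).add ((hda (a := a) x).const_mul (c₂/a))
    have heq : a * Real.exp (a * x) * (V t + (t - x + 2) * c₂)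
        = a * Real.exp (a * x) * (V t + (t - x + 2) * c₂) + Real.exp (a * x) * (-c₂)
          + (c₂/a) * (a * Real.exp (a * x)) := by
      field_simp
      ring
    rw [heq]
    exact h4
  have hint := dom_int ha hc₂ hVanti hVnn (V := V) ht
  have htend : Tendsto G atBot (𝓝 0) := by
    have hexp0 : Tendsto (fun x => Real.exp (a * x)) atBot (𝓝 0) :=
      Real.tendsto_exp_atBot.comp ((tendsto_const_mul_atBot_of_pos ha).2 tendsto_id)
    have h5 : Tendsto (fun r => (V t + (t + 2) * c₂ + c₂/a) * Real.exp (a * r)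
        - c₂ * (r * Real.exp (a * r))) atBot (𝓝 0) := by
      have := (hexp0.const_mul (V t + (t + 2) * c₂ + c₂/a)).sub
        ((tendsto_mul_exp_atBot ha).const_mul c₂)
      simpa using this
    refine h5.congr (fun r => ?_)
    rw [hG]
    ring
  rw [MeasureTheory.integral_Iic_of_hasDerivAt_of_tendsto' hder hint htend, sub_zero, hG]
  simp only
  field_simp
  ring


include ha hc₂ hVanti hVnn hVbd in
lemma Ff_bounds {t : ℝ} (ht : t ≤ 0) :
    Real.exp (a * t) * V t ≤ (∫ r in Iic t, a * Real.exp (a * r) * V r) ∧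
    (∫ r in Iic t, a * Real.exp (a * r) * V r) ≤ Real.exp (a * t) * (V t + 2*c₂ + c₂/a) := by
  constructor
  · have hlow : ∫ r in Iic t, (a * Real.exp (a * r)) * V t
        = Real.exp (a * t) * V t := by
      rw [MeasureTheory.integral_mul_const, exp_int_Iic ha]
    rw [← hlow]
    apply setIntegral_mono_on (((expIic ha t).const_mul a).mul_const (V t))
      (psi_int ha hc₂ hVanti hVnn hVbd ht) measurableSet_Iic
    intro r hr
    exact mul_le_mul_of_nonneg_left (hVanti (hr : r ≤ t)) (by positivity)
  · rw [← dom_integral ha hc₂ hVanti hVnn ht]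
    apply setIntegral_mono_on (psi_int ha hc₂ hVanti hVnn hVbd ht)
      (dom_int ha hc₂ hVanti hVnn ht) measurableSet_Iic
    intro r hr
    exact mul_le_mul_of_nonneg_left (hVbd r t hr ht) (by positivity)

include ha hc₂ hVanti hVnn hVbd in
lemma Ff_split {s t : ℝ} (hst : s ≤ t) (ht : t ≤ 0) :
    (∫ r in Iic t, a * Real.exp (a * r) * V r)
      = (∫ r in Iic s, a * Real.exp (a * r) * V r)
        + ∫ r in Ioc s t, a * Real.exp (a * r) * V r := by
  rw [← Iic_union_Ioc_eq_Iic hst]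
  rw [MeasureTheory.setIntegral_union (Iic_disjoint_Ioc le_rfl) measurableSet_Ioc
    ((psi_int ha hc₂ hVanti hVnn hVbd ht).mono_set (Iic_subset_Iic.2 hst))
    ((psi_int ha hc₂ hVanti hVnn hVbd ht).mono_set Ioc_subset_Iic_self)]

include ha in
lemma exp_int_Ioc {s t : ℝ} (hst : s ≤ t) :
    ∫ r in Ioc s t, a * Real.exp (a * r) = Real.exp (a * t) - Real.exp (a * s) := by
  rw [← intervalIntegral.integral_of_le hst]
  have hder : ∀ x ∈ uIcc s t, HasDerivAt (fun x => Real.exp (a * x)) (a * Real.exp (a * x)) x :=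
    fun x _ => by simpa [mul_comm] using ((hasDerivAt_id x).const_mul a).exp
  rw [intervalIntegral.integral_eq_sub_of_hasDerivAt hder
    ((Continuous.intervalIntegrable (by continuity) s t))]

include ha hc₂ hVanti hVnn hVbd in
lemma Ff_incr_bounds {s t : ℝ} (hst : s ≤ t) (ht : t ≤ 0) :
    (Real.exp (a * t) - Real.exp (a * s)) * V t
      ≤ (∫ r in Ioc s t, a * Real.exp (a * r) * V r) ∧
    (∫ r in Ioc s t, a * Real.exp (a * r) * V r)
      ≤ (Real.exp (a * t) - Real.exp (a * s)) * V s := by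
  have hψ : IntegrableOn (fun r => a * Real.exp (a * r) * V r) (Ioc s t) :=
    (psi_int ha hc₂ hVanti hVnn hVbd ht).mono_set Ioc_subset_Iic_self
  have hconst : ∀ C : ℝ, ∫ r in Ioc s t, (a * Real.exp (a * r)) * C
      = (Real.exp (a * t) - Real.exp (a * s)) * C := by
    intro C
    rw [MeasureTheory.integral_mul_const, exp_int_Ioc ha hst]
  have hexp_int : IntegrableOn (fun r => a * Real.exp (a * r)) (Ioc s t) :=
    MeasureTheory.IntegrableOn.mono_set ((expIic ha t).const_mul a) Ioc_subset_Iic_self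
  constructor
  · rw [← hconst (V t)]
    apply setIntegral_mono_on (hexp_int.mul_const (V t)) hψ measurableSet_Ioc
    intro r hr
    exact mul_le_mul_of_nonneg_left (hVanti hr.2) (by positivity)
  · rw [← hconst (V s)]
    apply setIntegral_mono_on hψ (hexp_int.mul_const (V s)) measurableSet_Ioc
    intro r hr
    exact mul_le_mul_of_nonneg_left (hVanti hr.1.le) (by positivity)

include ha hc₂ hVanti hVnn hVbd in
lemma Ff_cont : ContinuousOn (fun t => ∫ r in Iic t, a * Real.exp (a * r) * V r) (Iic 0) := by
  intro t₀ ht₀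
  rw [Metric.continuousWithinAt_iff]
  intro ε hε
  set C : ℝ := V (t₀ - 1) + 1 with hC
  have hC0 : 0 < C := by have := hVnn (t₀ - 1); linarith
  -- continuity of exp (a * ·)
  have hexpc : Continuous fun u : ℝ => Real.exp (a * u) := by continuity
  have := (Metric.continuous_iff.1 hexpc) t₀ (ε / C) (by positivity)
  obtain ⟨δ', hδ', hd⟩ := this
  refine ⟨min δ' 1, lt_min hδ' one_pos, ?_⟩
  intro u hu hdist
  have hu0 : u ≤ 0 := hu
  have hud : |u - t₀| < min δ' 1 := by rwa [Real.dist_eq] at hdist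
  have h1 := abs_lt.1 hud
  have hmin1 := min_le_left δ' 1
  have hmin2 := min_le_right δ' 1
  have hdexp : |Real.exp (a * u) - Real.exp (a * t₀)| < ε / C := by
    have := hd u (show dist u t₀ < δ' by rw [Real.dist_eq]; linarith [h1.1, h1.2])
    rwa [Real.dist_eq] at this
  -- both V u and V t₀ ≤ C
  have hVle : ∀ w : ℝ, t₀ - 1 ≤ w → V w ≤ C := fun w hw => by
    have := hVanti hw; linarith
  rcases le_total u t₀ with hc | hc
  · have hsplit := Ff_split ha hc₂ hVanti hVnn hVbd hc (mem_Iic.1 ht₀)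
    have hib := Ff_incr_bounds ha hc₂ hVanti hVnn hVbd hc (mem_Iic.1 ht₀)
    rw [Real.dist_eq]
    have he : Real.exp (a * u) ≤ Real.exp (a * t₀) := by
      apply Real.exp_le_exp.2
      nlinarith
    have hVuC : V u ≤ C := hVle u (by linarith [h1.1])
    have habs : |(∫ r in Iic u, a * Real.exp (a * r) * V r)
        - ∫ r in Iic t₀, a * Real.exp (a * r) * V r|
        = ∫ r in Ioc u t₀, a * Real.exp (a * r) * V r := by
      rw [hsplit]
      rw [abs_sub_comm]
      rw [show (∫ r in Iic u, a * Real.exp (a * r) * V r)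
          + (∫ r in Ioc u t₀, a * Real.exp (a * r) * V r)
          - (∫ r in Iic u, a * Real.exp (a * r) * V r)
          = ∫ r in Ioc u t₀, a * Real.exp (a * r) * V r from by ring]
      refine abs_of_nonneg ?_
      have := hib.1
      nlinarith [Real.exp_pos (a*u), hVnn t₀]
    rw [habs]
    calc (∫ r in Ioc u t₀, a * Real.exp (a * r) * V r)
        ≤ (Real.exp (a * t₀) - Real.exp (a * u)) * V u := hib.2
      _ ≤ (Real.exp (a * t₀) - Real.exp (a * u)) * C := by nlinarith
      _ < (ε / C) * C := by
          apply mul_lt_mul_of_pos_right _ hC0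
          calc Real.exp (a * t₀) - Real.exp (a * u)
              ≤ |Real.exp (a * u) - Real.exp (a * t₀)| := by
                rw [abs_sub_comm]; exact le_abs_self _
            _ < ε / C := hdexp
      _ = ε := by field_simp
  · -- t₀ ≤ u ≤ 0
    have hsplit := Ff_split ha hc₂ hVanti hVnn hVbd hc hu0
    have hib := Ff_incr_bounds ha hc₂ hVanti hVnn hVbd hc hu0
    rw [Real.dist_eq]
    have he : Real.exp (a * t₀) ≤ Real.exp (a * u) := by
      apply Real.exp_le_exp.2
      nlinarith
    have hVt₀C : V t₀ ≤ C := hVle t₀ (by linarith)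
    have habs : |(∫ r in Iic u, a * Real.exp (a * r) * V r)
        - ∫ r in Iic t₀, a * Real.exp (a * r) * V r|
        = ∫ r in Ioc t₀ u, a * Real.exp (a * r) * V r := by
      rw [hsplit]
      rw [show (∫ r in Iic t₀, a * Real.exp (a * r) * V r)
          + (∫ r in Ioc t₀ u, a * Real.exp (a * r) * V r)
          - (∫ r in Iic t₀, a * Real.exp (a * r) * V r)
          = ∫ r in Ioc t₀ u, a * Real.exp (a * r) * V r from by ring]
      refine abs_of_nonneg ?_
      have := hib.1
      nlinarith [Real.exp_pos (a*t₀), hVnn u]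
    rw [habs]
    calc (∫ r in Ioc t₀ u, a * Real.exp (a * r) * V r)
        ≤ (Real.exp (a * u) - Real.exp (a * t₀)) * V t₀ := hib.2
      _ ≤ (Real.exp (a * u) - Real.exp (a * t₀)) * C := by nlinarith
      _ < (ε / C) * C := by
          apply mul_lt_mul_of_pos_right _ hC0
          calc Real.exp (a * u) - Real.exp (a * t₀)
              ≤ |Real.exp (a * u) - Real.exp (a * t₀)| := le_abs_self _
            _ < ε / C := hdexp
      _ = ε := by field_simp

end


/-- Lemma `h0`: if `x₀` is bounded continuous on `(-∞,0]` with
uniformly bounded variation on the intervals `[-k,-k+1]`, then there exists a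
bounded continuous `h₀` with `h₀ ≥_A 0`, `h₀ ≥_A x₀` and `h₀ ≥_A x₀ - x₀(0)`
for the exponential order with `A = (-a)`. -/
theorem stmt4 (a : ℝ) (ha : 0 < a) (x₀ : ℝ → ℝ)
    (hcont : ContinuousOn x₀ (Iic 0))
    (hbdd : ∃ M : ℝ, ∀ t ≤ (0:ℝ), |x₀ t| ≤ M)
    (hvar : ∃ c : ℝ, ∀ k : ℕ, 1 ≤ k →
      eVariationOn x₀ (Icc (-(k:ℝ)) (-(k:ℝ) + 1)) ≤ ENNReal.ofReal c) :
    ∃ h₀ : ℝ → ℝ, ContinuousOn h₀ (Iic 0) ∧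
      (∃ Mh : ℝ, ∀ t ≤ (0:ℝ), |h₀ t| ≤ Mh) ∧
      -- h₀ ≥_A 0
      (∀ t ≤ (0:ℝ), 0 ≤ h₀ t) ∧
      MonotoneOn (fun t => Real.exp (a * t) * h₀ t) (Iic 0) ∧
      -- h₀ ≥_A x₀
      (∀ t ≤ (0:ℝ), x₀ t ≤ h₀ t) ∧
      MonotoneOn (fun t => Real.exp (a * t) * (h₀ t - x₀ t)) (Iic 0) ∧
      -- h₀ ≥_A x₀ - x₀(0)
      (∀ t ≤ (0:ℝ), x₀ t - x₀ 0 ≤ h₀ t) ∧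
      MonotoneOn (fun t => Real.exp (a * t) * (h₀ t - (x₀ t - x₀ 0))) (Iic 0) := by
  obtain ⟨M, hM⟩ := hbdd
  have hM0 : 0 ≤ M := le_trans (abs_nonneg _) (hM 0 le_rfl)
  obtain ⟨c, hc⟩ := hvar
  set cm : ℝ := max c 0 with hcmdef
  have hcm : 0 ≤ cm := le_max_right _ _
  have hvar' : ∀ k : ℕ, 1 ≤ k →
      eVariationOn x₀ (Icc (-(k:ℝ)) (-(k:ℝ) + 1)) ≤ ENNReal.ofReal cm :=
    fun k hk => le_trans (hc k hk) (ENNReal.ofReal_le_ofReal (le_max_left _ _))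
  set c₂ : ℝ := 2 * cm with hc₂def
  have hc₂ : 0 ≤ c₂ := by positivity
  -- the variation function V
  set V : ℝ → ℝ := Vv x₀ with hVdef
  have hVanti : Antitone V := fun s t hst => Vv_anti x₀ cm hcm hvar' hst
  have hVnn : ∀ t, 0 ≤ V t := Vv_nonneg x₀
  have hVbd : ∀ r t : ℝ, r ≤ t → t ≤ 0 → V r ≤ V t + (t - r + 2) * c₂ := by
    intro r t hrt ht
    rw [hVdef]
    rw [Vv_add x₀ cm hcm hvar' hrt ht]
    have := wv_le x₀ cm hcm hvar' hrt ht
    rw [hc₂def]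
    linarith
  -- the integral function F
  set F : ℝ → ℝ := fun t => ∫ r in Iic t, a * Real.exp (a * r) * V r with hFdef
  have hB : 0 ≤ 2*c₂ + c₂/a := by positivity
  -- key bоunds for F
  have hFb : ∀ t : ℝ, t ≤ 0 → V t ≤ (Real.exp (a*t))⁻¹ * F t ∧
      (Real.exp (a*t))⁻¹ * F t ≤ V t + (2*c₂ + c₂/a) := by
    intro t ht
    obtain ⟨h1, h2⟩ := Ff_bounds ha hc₂ hVanti hVnn hVbd ht
    have hE := Real.exp_pos (a*t)
    constructor
    · have h3 : (Real.exp (a*t))⁻¹ * (Real.exp (a*t) * V t) ≤ (Real.exp (a*t))⁻¹ * F t :=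
        mul_le_mul_of_nonneg_left h1 (by positivity)
      rwa [← mul_assoc, inv_mul_cancel₀ hE.ne', one_mul] at h3
    · have h3 : (Real.exp (a*t))⁻¹ * F t
          ≤ (Real.exp (a*t))⁻¹ * (Real.exp (a*t) * (V t + 2*c₂ + c₂/a)) :=
        mul_le_mul_of_nonneg_left h2 (by positivity)
      rw [← mul_assoc, inv_mul_cancel₀ hE.ne', one_mul] at h3
      linarith
  refine ⟨fun t => x₀ t + (Real.exp (a*t))⁻¹ * F t - V t + M, ?_, ?_, ?_, ?_, ?_, ?_, ?_, ?_⟩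
  · -- continuity
    have hFc : ContinuousOn F (Iic 0) := Ff_cont ha hc₂ hVanti hVnn hVbd
    have hVc : ContinuousOn V (Iic 0) := Vv_cont x₀ cm hcm hvar' hcont
    have hec : Continuous fun t : ℝ => (Real.exp (a*t))⁻¹ :=
      (Real.continuous_exp.comp (continuous_const.mul continuous_id)).inv₀
        (fun x => (Real.exp_pos _).ne')
    exact (((hcont.add (hec.continuousOn.mul hFc)).sub hVc).add continuousOn_const)
  · -- boundedness
    refine ⟨M + (2*c₂ + c₂/a) + M, fun t ht => ?_⟩
    obtain ⟨h1, h2⟩ := hFb t ht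
    have habs := abs_le.1 (hM t ht)
    rw [abs_le]
    constructor <;> [linarith [habs.1]; linarith [habs.2]]
  · -- nonneg
    intro t ht
    obtain ⟨h1, h2⟩ := hFb t ht
    have habs := abs_le.1 (hM t ht)
    have := hVnn t
    linarith [habs.1]
  · -- monotone e^{at} h₀
    intro s hs t ht hst
    simp only
    have hid : ∀ u : ℝ, Real.exp (a*u) * (x₀ u + (Real.exp (a*u))⁻¹ * F u - V u + M)
        = Real.exp (a*u) * x₀ u + F u - Real.exp (a*u) * V u + M * Real.exp (a*u) := by
      intro u
      have := (Real.exp_pos (a*u)).ne'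
      field_simp
    rw [hid s, hid t]
    have hs0 : s ≤ 0 := hs
    have ht0 : t ≤ 0 := ht
    have hsplit := Ff_split ha hc₂ hVanti hVnn hVbd hst ht0
    have hincr := (Ff_incr_bounds ha hc₂ hVanti hVnn hVbd hst ht0).1
    have hw : V s = (eVariationOn x₀ (Icc s t)).toReal + V t := Vv_add x₀ cm hcm hvar' hst ht0
    have hw0 : 0 ≤ (eVariationOn x₀ (Icc s t)).toReal := ENNReal.toReal_nonneg
    have hxw := abs_le.1 (xdiff_le x₀ hst (var_ne_top x₀ cm hcm hvar' hst ht0))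
    have hE : Real.exp (a*s) ≤ Real.exp (a*t) := Real.exp_le_exp.2 (by nlinarith)
    have hEs := Real.exp_pos (a*s)
    have habs := abs_le.1 (hM t ht0)
    have hFt : F t = F s + ∫ r in Ioc s t, a * Real.exp (a * r) * V r := hsplit
    nlinarith [mul_nonneg hEs.le (show (0:ℝ) ≤ x₀ t - x₀ s + (eVariationOn x₀ (Icc s t)).toReal
        by linarith [hxw.1]),
      mul_nonneg (sub_nonneg.2 hE) (show (0:ℝ) ≤ x₀ t + M by linarith [habs.1]), hincr]
  · -- h₀ ≥ x₀
    intro t ht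
    obtain ⟨h1, h2⟩ := hFb t ht
    linarith
  · -- monotone e^{at}(h₀ - x₀)
    intro s hs t ht hst
    simp only
    have hid : ∀ u : ℝ, Real.exp (a*u) * (x₀ u + (Real.exp (a*u))⁻¹ * F u - V u + M - x₀ u)
        = F u - Real.exp (a*u) * V u + M * Real.exp (a*u) := by
      intro u
      have := (Real.exp_pos (a*u)).ne'
      field_simp
      ring
    rw [hid s, hid t]
    have hs0 : s ≤ 0 := hs
    have ht0 : t ≤ 0 := ht
    have hsplit := Ff_split ha hc₂ hVanti hVnn hVbd hst ht0
    have hincr := (Ff_incr_bounds ha hc₂ hVanti hVnn hVbd hst ht0).1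
    have hw : V s = (eVariationOn x₀ (Icc s t)).toReal + V t := Vv_add x₀ cm hcm hvar' hst ht0
    have hw0 : 0 ≤ (eVariationOn x₀ (Icc s t)).toReal := ENNReal.toReal_nonneg
    have hE : Real.exp (a*s) ≤ Real.exp (a*t) := Real.exp_le_exp.2 (by nlinarith)
    have hEs := Real.exp_pos (a*s)
    have hFt : F t = F s + ∫ r in Ioc s t, a * Real.exp (a * r) * V r := hsplit
    nlinarith [mul_nonneg hEs.le hw0, mul_nonneg (sub_nonneg.2 hE) hM0, hincr]
  · -- h₀ ≥ x₀ - x₀ 0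
    intro t ht
    obtain ⟨h1, h2⟩ := hFb t ht
    have habs := abs_le.1 (hM 0 le_rfl)
    linarith [habs.1]
  · -- monotone e^{at}(h₀ - (x₀ - x₀ 0))
    intro s hs t ht hst
    simp only
    have hid : ∀ u : ℝ, Real.exp (a*u) * (x₀ u + (Real.exp (a*u))⁻¹ * F u - V u + M
        - (x₀ u - x₀ 0))
        = F u - Real.exp (a*u) * V u + (M + x₀ 0) * Real.exp (a*u) := by
      intro u
      have := (Real.exp_pos (a*u)).ne'
      field_simp
      ring
    rw [hid s, hid t]
    have hs0 : s ≤ 0 := hs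
    have ht0 : t ≤ 0 := ht
    have hsplit := Ff_split ha hc₂ hVanti hVnn hVbd hst ht0
    have hincr := (Ff_incr_bounds ha hc₂ hVanti hVnn hVbd hst ht0).1
    have hw : V s = (eVariationOn x₀ (Icc s t)).toReal + V t := Vv_add x₀ cm hcm hvar' hst ht0
    have hw0 : 0 ≤ (eVariationOn x₀ (Icc s t)).toReal := ENNReal.toReal_nonneg
    have hE : Real.exp (a*s) ≤ Real.exp (a*t) := Real.exp_le_exp.2 (by nlinarith)
    have hEs := Real.exp_pos (a*s)
    have habs := abs_le.1 (hM 0 le_rfl)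
    have hM0' : 0 ≤ M + x₀ 0 := by linarith [habs.1]
    have hFt : F t = F s + ∫ r in Ioc s t, a * Real.exp (a * r) * V r := hsplit
    nlinarith [mul_nonneg hEs.le hw0, mul_nonneg (sub_nonneg.2 hE) hM0', hincr]
end

section
/- There exists a bounded continuous function $x:(-\infty,0]\to\mathbb{R}$ satisfying $\sup_{k\geq 1}V_{[-k,-k+1]}(x)<\infty$ which is not uniformly continuous. -/
open Set

noncomputable def w0 (t : ℝ) : ℝ := Metric.infDist t (Set.range ((↑) : ℤ → ℝ))

noncomputable def xf (t : ℝ) : ℝ := max 0 (1 - |t| * w0 t)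

lemma zrange_nonempty : (Set.range ((↑) : ℤ → ℝ)).Nonempty := ⟨0, 0, by norm_num⟩

lemma w0_nonneg (t : ℝ) : 0 ≤ w0 t := Metric.infDist_nonneg

lemma xf_nonneg (t : ℝ) : 0 ≤ xf t := le_max_left _ _

lemma xf_le_one (t : ℝ) : xf t ≤ 1 := by
  have h : 0 ≤ |t| * w0 t := mul_nonneg (abs_nonneg t) (w0_nonneg t)
  have : (1 : ℝ) - |t| * w0 t ≤ 1 := by linarith
  exact max_le (by norm_num) this

lemma w0_int (n : ℤ) : w0 (n : ℝ) = 0 :=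
  Metric.infDist_zero_of_mem ⟨n, rfl⟩

lemma xf_int (n : ℤ) : xf (n : ℝ) = 1 := by
  simp [xf, w0_int n]

/-- On the left half of `[-k, -k+1]`, the distance to `ℤ` is `t + k`. -/
lemma w0_eq_left {k : ℕ} (hk : 1 ≤ k) {t : ℝ}
    (ht : t ∈ Icc (-(k : ℝ)) (-(k : ℝ) + 1 / 2)) : w0 t = t + k := by
  obtain ⟨h1, h2⟩ := ht
  refine le_antisymm ?_ ?_
  · have hmem : (-(k : ℝ)) ∈ Set.range ((↑) : ℤ → ℝ) := ⟨-(k : ℤ), by push_cast; ring⟩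
    have := Metric.infDist_le_dist_of_mem (x := t) hmem
    rw [Real.dist_eq, abs_of_nonneg (by linarith)] at this
    unfold w0
    linarith
  · refine le_of_not_gt fun hlt => ?_
    obtain ⟨y, ⟨n, rfl⟩, hd⟩ := (Metric.infDist_lt_iff zrange_nonempty).1 hlt
    rw [Real.dist_eq] at hd
    rcases le_or_gt (n : ℝ) (-(k : ℝ)) with hn | hn
    · have : t - n ≤ |t - n| := le_abs_self _
      linarith
    · have hn' : -(k : ℝ) + 1 ≤ (n : ℝ) := by
        have : -(k : ℤ) < n := by exact_mod_cast hn
        have : -(k : ℤ) + 1 ≤ n := this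
        exact_mod_cast this
      have : -(t - n) ≤ |t - n| := neg_le_abs _
      have hk1 : (1 : ℝ) ≤ (k : ℝ) := by exact_mod_cast hk
      linarith

/-- On the right half of `[-k, -k+1]`, the distance to `ℤ` is `-k + 1 - t`. -/
lemma w0_eq_right {k : ℕ} (hk : 1 ≤ k) {t : ℝ}
    (ht : t ∈ Icc (-(k : ℝ) + 1 / 2) (-(k : ℝ) + 1)) : w0 t = (-(k : ℝ) + 1) - t := by
  obtain ⟨h1, h2⟩ := ht
  refine le_antisymm ?_ ?_
  · have hmem : (-(k : ℝ) + 1) ∈ Set.range ((↑) : ℤ → ℝ) := ⟨-(k : ℤ) + 1, by push_cast; ring⟩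
    have := Metric.infDist_le_dist_of_mem (x := t) hmem
    rwa [Real.dist_eq, abs_of_nonpos (by linarith), neg_sub] at this
  · refine le_of_not_gt fun hlt => ?_
    obtain ⟨y, ⟨n, rfl⟩, hd⟩ := (Metric.infDist_lt_iff zrange_nonempty).1 hlt
    rw [Real.dist_eq] at hd
    rcases le_or_gt (-(k : ℝ) + 1) (n : ℝ) with hn | hn
    · have : -(t - n) ≤ |t - n| := neg_le_abs _
      linarith
    · have hn' : (n : ℝ) ≤ -(k : ℝ) := by
        have : (n : ℤ) < -(k : ℤ) + 1 := by exact_mod_cast hn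
        have : (n : ℤ) ≤ -(k : ℤ) := by omega
        exact_mod_cast this
      have : t - n ≤ |t - n| := le_abs_self _
      have hk1 : (1 : ℝ) ≤ (k : ℝ) := by exact_mod_cast hk
      linarith

lemma xf_antitone {k : ℕ} (hk : 1 ≤ k) :
    AntitoneOn xf (Icc (-(k : ℝ)) (-(k : ℝ) + 1 / 2)) := by
  have hk1 : (1 : ℝ) ≤ (k : ℝ) := by exact_mod_cast hk
  intro s hs t ht hst
  have hs' := w0_eq_left hk hs
  have ht' := w0_eq_left hk ht
  have hsneg : s ≤ 0 := by have := hs.2; linarith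
  have htneg : t ≤ 0 := by have := ht.2; linarith
  unfold xf
  rw [hs', ht', abs_of_nonpos hsneg, abs_of_nonpos htneg]
  apply max_le_max le_rfl
  have h2 : t + s + (k : ℝ) ≤ 0 := by
    have := hs.2; have := ht.2; linarith
  nlinarith [hs.1, ht.1, hst]

lemma xf_monotone {k : ℕ} (hk : 1 ≤ k) :
    MonotoneOn xf (Icc (-(k : ℝ) + 1 / 2) (-(k : ℝ) + 1)) := by
  have hk1 : (1 : ℝ) ≤ (k : ℝ) := by exact_mod_cast hk
  intro s hs t ht hst
  have hs' := w0_eq_right hk hs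
  have ht' := w0_eq_right hk ht
  have hsneg : s ≤ 0 := by have := hs.2; linarith
  have htneg : t ≤ 0 := by have := ht.2; linarith
  unfold xf
  rw [hs', ht', abs_of_nonpos hsneg, abs_of_nonpos htneg]
  apply max_le_max le_rfl
  nlinarith [hs.2, ht.2, hst]

lemma eVariationOn_neg {α : Type*} [LinearOrder α] (f : α → ℝ) (s : Set α) :
    eVariationOn (fun t => -f t) s = eVariationOn f s := by
  dsimp only [eVariationOn]
  congr 1 with p : 1
  congr 1 with i : 1
  rw [edist_neg_neg]

lemma AntitoneOn.eVariationOn_le' {α : Type*} [LinearOrder α] {f : α → ℝ} {s : Set α}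
    (hf : AntitoneOn f s) {a b : α} (as : a ∈ s) (bs : b ∈ s) :
    eVariationOn f (s ∩ Icc a b) ≤ ENNReal.ofReal (f a - f b) := by
  have hmono : MonotoneOn (fun t => -f t) s := fun x hx y hy hxy =>
    neg_le_neg (hf hx hy hxy)
  have := hmono.eVariationOn_le as bs
  rwa [eVariationOn_neg, show -f b - -f a = f a - f b by ring] at this

lemma xf_continuous : Continuous xf := by
  apply continuous_const.max
  exact continuous_const.sub (continuous_abs.mul (Metric.continuous_infDist_pt _))

/-- there is a bounded continuous `x : (-∞,0] → ℝ` with uniformly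
bounded variation on the intervals `[-k,-k+1]`, `k ≥ 1`, which is not uniformly
continuous on `(-∞,0]`. -/
theorem stmt7 :
    ∃ x : ℝ → ℝ, ContinuousOn x (Iic 0) ∧ (∃ M : ℝ, ∀ t ≤ (0:ℝ), |x t| ≤ M) ∧
      (∃ c : ℝ, ∀ k : ℕ, 1 ≤ k →
        eVariationOn x (Icc (-(k:ℝ)) (-(k:ℝ) + 1)) ≤ ENNReal.ofReal c) ∧
      ¬ UniformContinuousOn x (Iic 0) := by
  refine ⟨xf, xf_continuous.continuousOn, ⟨1, fun t _ => ?_⟩, ⟨2, fun k hk => ?_⟩, ?_⟩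
  · rw [abs_of_nonneg (xf_nonneg t)]; exact xf_le_one t
  · -- variation bound
    have hk1 : (1 : ℝ) ≤ (k : ℝ) := by exact_mod_cast hk
    set a : ℝ := -(k : ℝ)
    set m : ℝ := -(k : ℝ) + 1 / 2
    set b : ℝ := -(k : ℝ) + 1
    have ham : a ≤ m := by simp only [a, m]; linarith
    have hmb : m ≤ b := by simp only [m, b]; linarith
    have hsplit := eVariationOn.Icc_add_Icc xf ham hmb (mem_univ m)
    simp only [univ_inter] at hsplit
    have h1 : eVariationOn xf (Icc a m) ≤ ENNReal.ofReal 1 := by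
      have := (xf_antitone hk).eVariationOn_le' (a := a) (b := m)
        (left_mem_Icc.2 ham) (right_mem_Icc.2 ham)
      rw [inter_self] at this
      refine this.trans (ENNReal.ofReal_le_ofReal ?_)
      have := xf_le_one a; have := xf_nonneg m; linarith
    have h2 : eVariationOn xf (Icc m b) ≤ ENNReal.ofReal 1 := by
      have := (xf_monotone hk).eVariationOn_le (a := m) (b := b)
        (left_mem_Icc.2 hmb) (right_mem_Icc.2 hmb)
      rw [inter_self] at this
      refine this.trans (ENNReal.ofReal_le_ofReal ?_)
      have := xf_le_one b; have := xf_nonneg m; linarith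
    calc eVariationOn xf (Icc a b) = eVariationOn xf (Icc a m) + eVariationOn xf (Icc m b) :=
          hsplit.symm
      _ ≤ ENNReal.ofReal 1 + ENNReal.ofReal 1 := add_le_add h1 h2
      _ = ENNReal.ofReal 2 := by rw [← ENNReal.ofReal_add] <;> norm_num
  · -- not uniformly continuous
    intro hU
    rw [Metric.uniformContinuousOn_iff] at hU
    obtain ⟨δ, hδ, hδ'⟩ := hU (1/2) (by norm_num)
    obtain ⟨n, hn⟩ := exists_nat_gt (1 / δ)
    set k : ℕ := max n 2
    have hk2 : 2 ≤ k := le_max_right _ _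
    have hk1 : 1 ≤ k := le_trans (by norm_num) hk2
    have hkR : (2 : ℝ) ≤ (k : ℝ) := by exact_mod_cast hk2
    have hkpos : (0 : ℝ) < (k : ℝ) := by linarith
    have hkinv : 1 / (k : ℝ) < δ := by
      have hnk : (n : ℝ) ≤ (k : ℝ) := by exact_mod_cast le_max_left n 2
      have h1δ : 1 / δ < (k : ℝ) := lt_of_lt_of_le hn hnk
      have h2 : (1 : ℝ) < (k : ℝ) * δ := (div_lt_iff₀ hδ).1 h1δ
      rw [div_lt_iff₀ hkpos]
      nlinarith
    set a : ℝ := -(k : ℝ)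
    set b : ℝ := -(k : ℝ) + 1 / k
    have ha : a ∈ Iic (0 : ℝ) := by simp only [a, mem_Iic]; linarith
    have hb : b ∈ Iic (0 : ℝ) := by
      simp only [b, mem_Iic]
      have : 1 / (k : ℝ) ≤ 1 := by
        rw [div_le_one hkpos]; linarith
      linarith
    have hdist : dist a b < δ := by
      rw [Real.dist_eq]
      have : a - b = -(1 / k) := by simp only [a, b]; ring
      rw [this, abs_neg, abs_of_pos (by positivity)]
      exact hkinv
    have hxa : xf a = 1 := by
      have h := xf_int (-(k : ℤ))
      push_cast at h
      exact h
    have hbmem : b ∈ Icc (-(k : ℝ)) (-(k : ℝ) + 1 / 2) := by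
      constructor
      · simp only [b]
        have : (0:ℝ) < 1 / (k : ℝ) := by positivity
        linarith
      · simp only [b]
        have : 1 / (k : ℝ) ≤ 1 / 2 := by
          apply div_le_div_of_nonneg_left (by norm_num) (by norm_num) hkR
        linarith
    have hxb : xf b = 1 / (k : ℝ) ^ 2 := by
      unfold xf
      rw [w0_eq_left hk1 hbmem]
      have hbneg : b ≤ 0 := hb
      rw [abs_of_nonpos hbneg]
      have hbk : b + (k : ℝ) = 1 / k := by simp only [b]; ring
      rw [hbk]
      have : 1 - -b * (1 / (k : ℝ)) = 1 / (k : ℝ) ^ 2 := by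
        simp only [b]; field_simp; ring
      rw [this]
      exact max_eq_right (by positivity)
    have hfar : (1 : ℝ) / 2 ≤ dist (xf a) (xf b) := by
      rw [hxa, hxb, Real.dist_eq]
      have h4 : (4 : ℝ) ≤ (k : ℝ) ^ 2 := by nlinarith
      have hle : 1 / (k : ℝ) ^ 2 ≤ 1 / 4 := by
        apply div_le_div_of_nonneg_left (by norm_num) (by norm_num) h4
      rw [abs_of_nonneg (by linarith)]
      linarith
    have := hδ' a ha b hb hdist
    linarith
end

section
/- Let $A$ be a diagonal $m\times m$ matrix with negative entries. The positive cone $BC^+_A$ has empty interior in $(BC,\|\cdot\|_\infty)$. -/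
open Set

/-- The cone `BC⁺_A` for a diagonal matrix `A` with diagonal entries `a i < 0`,
inside the Banach space `BC` of bounded continuous functions `(-∞,0] → ℝ^m`. -/
def conePlus (m : ℕ) (a : Fin m → ℝ) :
    Set (BoundedContinuousFunction ↥(Iic (0:ℝ)) (Fin m → ℝ)) :=
  {x | (∀ t i, 0 ≤ x t i) ∧
    ∀ s t : ↥(Iic (0:ℝ)), s ≤ t → ∀ i,
      Real.exp (a i * ((t:ℝ) - (s:ℝ))) * x s i ≤ x t i}

set_option maxHeartbeats 1000000 in
/-- the positive cone `BC⁺_A` has empty interior in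
`(BC, ‖·‖_∞)`. -/
theorem stmt9 (m : ℕ) (hm : 0 < m) (a : Fin m → ℝ) (ha : ∀ i, a i < 0) :
    interior (conePlus m a) = ∅ := by
  by_contra h
  rw [← ne_eq, ← nonempty_iff_ne_empty] at h
  obtain ⟨x, hx⟩ := h
  obtain ⟨ε, hε, hball⟩ := Metric.isOpen_iff.1 isOpen_interior x hx
  have hsub : Metric.ball x ε ⊆ conePlus m a := hball.trans interior_subset
  set i : Fin m := ⟨0, hm⟩ with hi
  set t : ↥(Iic (0:ℝ)) := ⟨0, by simp⟩ with ht
  have hc := (map_continuous x).continuousAt (x := t)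
  rw [Metric.continuousAt_iff] at hc
  obtain ⟨δ', hδ', hδ'c⟩ := hc (ε/8) (by positivity)
  set M : ℝ := ‖x‖ + ε with hMdef
  have hM : 0 < M := by positivity
  have hai : 0 < -a i := by linarith [ha i]
  set δ : ℝ := min (δ'/2) (ε / (8 * M * (-a i))) with hδdef
  have hδpos : 0 < δ := lt_min (by linarith) (by positivity)
  set s : ↥(Iic (0:ℝ)) := ⟨-δ, by simp; linarith⟩ with hs
  -- the bump function
  have contψ : Continuous (fun u : ↥(Iic (0:ℝ)) => fun j : Fin m =>
      if j = i then min 1 (max 0 (-(u:ℝ)/δ)) else 0) := by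
    apply continuous_pi
    intro j
    by_cases hj : j = i
    · simp only [if_pos hj]
      exact continuous_const.min (continuous_const.max
        ((continuous_subtype_val.neg).div_const δ))
    · simp only [if_neg hj]; exact continuous_const
  have hbnd : ∀ u : ↥(Iic (0:ℝ)), ‖(fun j : Fin m =>
      if j = i then min 1 (max 0 (-(u:ℝ)/δ)) else 0 : Fin m → ℝ)‖ ≤ 1 := by
    intro u
    rw [pi_norm_le_iff_of_nonneg zero_le_one]
    intro j
    by_cases hj : j = i
    · simp only [if_pos hj, Real.norm_eq_abs]
      rw [abs_le]
      constructor
      · exact le_trans (by norm_num) (le_min zero_le_one (le_max_left _ _))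
      · exact min_le_left _ _
    · simp [if_neg hj]
  set ψ : BoundedContinuousFunction ↥(Iic (0:ℝ)) (Fin m → ℝ) :=
    BoundedContinuousFunction.ofNormedAddCommGroup _ contψ 1 hbnd with hψ
  have hψu : ∀ u, ψ u = fun j : Fin m =>
      if j = i then min 1 (max 0 (-(u:ℝ)/δ)) else 0 := fun u => rfl
  set y := x + (ε/2) • ψ with hy
  have hymem : y ∈ Metric.ball x ε := by
    rw [Metric.mem_ball]
    have hle : dist y x ≤ ε/2 := by
      apply BoundedContinuousFunction.dist_le (by linarith) |>.2
      intro u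
      have heq : y u - x u = (ε/2) • ψ u := by
        simp [hy]
      rw [dist_eq_norm, heq, norm_smul, Real.norm_eq_abs, abs_of_pos (by linarith)]
      have hb := hbnd u
      rw [← hψu u] at hb
      nlinarith
    linarith
  obtain ⟨hy0, hycone⟩ := hsub hymem
  have hst : s ≤ t := by
    rw [Subtype.mk_le_mk]; linarith
  have key := hycone s t hst i
  have hψs : ψ s i = 1 := by
    rw [hψu s]
    simp [hs, neg_neg, div_self (ne_of_gt hδpos)]
  have hψt : ψ t i = 0 := by
    rw [hψu t]
    norm_num
  have hys : y s i = x s i + ε/2 := by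
    simp [hy, hψs]
  have hyt : y t i = x t i := by
    simp [hy, hψt]
  rw [hys, hyt] at key
  have hts : (t:ℝ) - (s:ℝ) = δ := by simp [ht, hs]
  rw [hts] at key
  have hP0 : 0 ≤ x s i + ε/2 := by
    have := hy0 s i
    rwa [hys] at this
  have hPM : x s i + ε/2 ≤ M := by
    have h1 : x s i ≤ ‖x s i‖ := le_trans (le_abs_self _) (le_of_eq (Real.norm_eq_abs _).symm)
    have h2 : ‖x s i‖ ≤ ‖x s‖ := norm_le_pi_norm (x s) i
    have h3 : ‖x s‖ ≤ ‖x‖ := x.norm_coe_le_norm s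
    rw [hMdef]; linarith
  have hexp : 1 + a i * δ ≤ Real.exp (a i * δ) := by
    linarith [Real.add_one_le_exp (a i * δ)]
  have hkey2 : (1 + a i * δ) * (x s i + ε/2) ≤ x t i :=
    le_trans (mul_le_mul_of_nonneg_right hexp hP0) key
  have haM : a i * δ * M ≤ a i * δ * (x s i + ε/2) :=
    mul_le_mul_of_nonpos_left hPM (by nlinarith)
  have hδM : -(ε/8) ≤ a i * δ * M := by
    have hδle : δ ≤ ε / (8 * M * (-a i)) := min_le_right _ _
    have h8 : 0 < 8 * M * (-a i) := by positivity
    rw [le_div_iff₀ h8] at hδle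
    nlinarith
  have hdist : dist s t < δ' := by
    rw [Subtype.dist_eq, hs, ht]
    simp only [Real.dist_eq]
    rw [abs_of_nonpos (by linarith)]
    have : δ ≤ δ'/2 := min_le_left _ _
    simp; linarith
  have hxc : dist (x s) (x t) < ε/8 := hδ'c hdist
  have hxci : |x s i - x t i| < ε/8 := by
    have := dist_le_pi_dist (x s) (x t) i
    rw [Real.dist_eq] at this
    linarith
  have := abs_lt.1 hxci
  nlinarith
end

section
/- Let $A$ be an $m\times m$ diagonal matrix with negative diagonal entries, so $\|e^{At}\|\leq e^{-at}$ for $t\geq 0$, where $a=\min_i|a_i|>0$. Let $v,c:(-\infty,0]\to\mathbb{R}^m$ be bounded $C^1$ functions with bounded derivatives. Define $b(s)=\int_{-\infty}^{s} e^{A(s-\tau)}\sup\{v'(\tau)-Av(\tau),\, c'(\tau)-Ac(\tau)\}\,d\tau$ (componentwise supremum). Then $b$ is well defined, bounded, and satisfies $v\leq_A b$ and $c\leq_A b$ for the exponential order $\leq_A$. -/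
open Set
open MeasureTheory Filter intervalIntegral Topology

private lemma exp_ii (β y s : ℝ) (hβ : β ≠ 0) :
    ∫ τ in y..s, Real.exp (β * τ) = (Real.exp (β * s) - Real.exp (β * y)) / β := by
  have h := intervalIntegral.integral_comp_mul_left (a := y) (b := s)
    (fun x => Real.exp x) hβ
  rw [integral_exp, smul_eq_mul] at h
  rw [h]; field_simp

private lemma exp_intOn {β : ℝ} (hβ : 0 < β) (s : ℝ) :
    IntegrableOn (fun τ => Real.exp (β * τ)) (Iic s) := by
  refine integrableOn_Iic_of_intervalIntegral_norm_bounded (Real.exp (β * s) / β) s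
    (fun y => ((Real.continuous_exp.comp (continuous_const.mul continuous_id)).integrableOn_Ioc))
    tendsto_id ?_
  filter_upwards [eventually_le_atBot s] with y hy
  rw [show (fun x => ‖Real.exp (β * x)‖) = (fun x => Real.exp (β * x)) from
    funext fun τ => Real.norm_of_nonneg (Real.exp_pos _).le]
  simp only [id]
  rw [exp_ii β y s hβ.ne']
  have h1 : Real.exp (β * s) - Real.exp (β * y) ≤ Real.exp (β * s) := by
    have := (Real.exp_pos (β * y)).le; linarith
  exact div_le_div_of_nonneg_right h1 hβ.le

private lemma exp_intVal {β : ℝ} (hβ : 0 < β) (s : ℝ) :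
    ∫ τ in Iic s, Real.exp (β * τ) = Real.exp (β * s) / β := by
  refine tendsto_nhds_unique
    (intervalIntegral_tendsto_integral_Iic s (exp_intOn hβ s) tendsto_id) ?_
  have h2 : Tendsto (fun y : ℝ => (Real.exp (β * s) - Real.exp (β * y)) / β) atBot
      (𝓝 ((Real.exp (β * s) - 0) / β)) := by
    refine Tendsto.div_const ?_ _
    exact tendsto_const_nhds.sub
      (Real.tendsto_exp_atBot.comp (tendsto_id.const_mul_atBot hβ))
  simpa using h2.congr fun y => (exp_ii β y s hβ.ne').symm

private lemma key {α : ℝ} (hα : α < 0) (u u' g : ℝ → ℝ)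
    (hu : ∀ t ≤ (0:ℝ), HasDerivWithinAt u (u' t) (Iic 0) t)
    (hu' : ContinuousOn u' (Iic 0))
    (hg : ContinuousOn g (Iic 0))
    (M : ℝ) (hM : ∀ τ ≤ (0:ℝ), |g τ| ≤ M)
    (Ku : ℝ) (hKu : 0 ≤ Ku) (hKub : ∀ τ ≤ (0:ℝ), |u τ| ≤ Ku)
    (hle : ∀ τ ≤ (0:ℝ), u' τ - α * u τ ≤ g τ) :
    (∀ s ≤ (0:ℝ), IntegrableOn (fun τ => Real.exp (-α * τ) * g τ) (Iic s)) ∧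
    (∀ s ≤ (0:ℝ), |∫ τ in Iic s, Real.exp (-α * τ) * g τ| ≤
      M * (Real.exp (-α * s) / (-α))) ∧
    (∀ s ≤ (0:ℝ), Real.exp (-α * s) * u s ≤ ∫ τ in Iic s, Real.exp (-α * τ) * g τ) ∧
    (∀ s t : ℝ, s ≤ t → t ≤ 0 →
      (∫ τ in Iic s, Real.exp (-α * τ) * g τ) - Real.exp (-α * s) * u s ≤
      (∫ τ in Iic t, Real.exp (-α * τ) * g τ) - Real.exp (-α * t) * u t) := by
  have hβ : 0 < -α := by linarith
  have hM0 : 0 ≤ M := (abs_nonneg _).trans (hM 0 le_rfl)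
  have hucont : ContinuousOn u (Iic 0) := fun t ht => (hu t ht).continuousWithinAt
  have hexpc : Continuous (fun τ : ℝ => Real.exp (-α * τ)) :=
    Real.continuous_exp.comp (continuous_const.mul continuous_id)
  -- integrability
  have hint : ∀ s ≤ (0:ℝ), IntegrableOn (fun τ => Real.exp (-α * τ) * g τ) (Iic s) := by
    intro s hs
    have hmeas : AEStronglyMeasurable (fun τ => Real.exp (-α * τ) * g τ)
        (volume.restrict (Iic s)) :=
      ContinuousOn.aestronglyMeasurable
        (hexpc.continuousOn.mul (hg.mono (Iic_subset_Iic.mpr hs))) measurableSet_Iic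
    refine Integrable.mono' ((exp_intOn hβ s).const_mul M) hmeas ?_
    filter_upwards [ae_restrict_mem measurableSet_Iic] with τ hτ
    have hτ0 : τ ≤ 0 := le_trans hτ hs
    rw [Real.norm_eq_abs, abs_mul, abs_of_pos (Real.exp_pos _), mul_comm M]
    exact mul_le_mul_of_nonneg_left (hM τ hτ0) (Real.exp_pos _).le
  -- bound
  have hbd : ∀ s ≤ (0:ℝ), |∫ τ in Iic s, Real.exp (-α * τ) * g τ| ≤
      M * (Real.exp (-α * s) / (-α)) := by
    intro s hs
    have h1 : ‖∫ τ in Iic s, Real.exp (-α * τ) * g τ‖ ≤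
        ∫ τ in Iic s, M * Real.exp (-α * τ) := by
      refine norm_integral_le_of_norm_le ((exp_intOn hβ s).const_mul M) ?_
      filter_upwards [ae_restrict_mem measurableSet_Iic] with τ hτ
      rw [Real.norm_eq_abs, abs_mul, abs_of_pos (Real.exp_pos _), mul_comm M]
      exact mul_le_mul_of_nonneg_left (hM τ (le_trans hτ hs)) (Real.exp_pos _).le
    rw [Real.norm_eq_abs] at h1
    refine h1.trans ?_
    rw [MeasureTheory.integral_const_mul, exp_intVal hβ s]
  -- FTC
  have ftc : ∀ s t : ℝ, s ≤ t → t ≤ 0 →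
      ∫ τ in s..t, Real.exp (-α * τ) * (u' τ - α * u τ) =
        Real.exp (-α * t) * u t - Real.exp (-α * s) * u s := by
    intro s t hst ht
    have hsub : Icc s t ⊆ Iic 0 := fun x hx => le_trans hx.2 ht
    have hderiv : ∀ x ∈ Ioo s t, HasDerivAt (fun τ => Real.exp (-α * τ) * u τ)
        (Real.exp (-α * x) * (u' x - α * u x)) x := by
      intro x hx
      have hx0 : x < 0 := lt_of_lt_of_le hx.2 ht
      have hu_at : HasDerivAt u (u' x) x :=
        (hu x hx0.le).hasDerivAt (Iic_mem_nhds hx0)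
      have hexp : HasDerivAt (fun τ => Real.exp (-α * τ))
          (Real.exp (-α * x) * (-α * 1)) x := ((hasDerivAt_id x).const_mul (-α)).exp
      have h := hexp.mul hu_at
      exact h.congr_deriv (by ring)
    have hcont : ContinuousOn (fun τ => Real.exp (-α * τ) * u τ) (Icc s t) :=
      hexpc.continuousOn.mul (hucont.mono hsub)
    have hintg : IntervalIntegrable
        (fun τ => Real.exp (-α * τ) * (u' τ - α * u τ)) volume s t := by
      apply ContinuousOn.intervalIntegrable
      rw [uIcc_of_le hst]
      exact hexpc.continuousOn.mul
        ((hu'.mono hsub).sub (continuousOn_const.mul (hucont.mono hsub)))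
    exact integral_eq_sub_of_hasDeriv_right_of_le hst hcont
      (fun x hx => (hderiv x hx).hasDerivWithinAt) hintg
  -- comparison over Ioc
  have hcmp : ∀ s t : ℝ, s ≤ t → t ≤ 0 →
      Real.exp (-α * t) * u t - Real.exp (-α * s) * u s ≤
        ∫ τ in Ioc s t, Real.exp (-α * τ) * g τ := by
    intro s t hst ht
    have hsub : Icc s t ⊆ Iic 0 := fun x hx => le_trans hx.2 ht
    rw [← ftc s t hst ht, intervalIntegral.integral_of_le hst]
    refine setIntegral_mono_on ?_ ((hint t ht).mono_set Ioc_subset_Iic_self)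
      measurableSet_Ioc ?_
    · exact ((hexpc.continuousOn.mul
        ((hu'.mono hsub).sub
          (continuousOn_const.mul (hucont.mono hsub)))).integrableOn_Icc).mono_set
        Ioc_subset_Icc_self
    · intro τ hτ
      exact mul_le_mul_of_nonneg_left (hle τ (hτ.2.trans ht)) (Real.exp_pos _).le
  -- splitting
  have hsplit : ∀ s t : ℝ, s ≤ t → t ≤ 0 →
      (∫ τ in Iic t, Real.exp (-α * τ) * g τ) =
        (∫ τ in Iic s, Real.exp (-α * τ) * g τ) +
          ∫ τ in Ioc s t, Real.exp (-α * τ) * g τ := by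
    intro s t hst ht
    rw [← Iic_union_Ioc_eq_Iic hst,
      setIntegral_union (Iic_disjoint_Ioc le_rfl) measurableSet_Ioc
        (hint s (hst.trans ht)) ((hint t ht).mono_set Ioc_subset_Iic_self)]
  refine ⟨hint, hbd, ?_, ?_⟩
  · -- nonneg part
    intro s hs
    have key2 : ∀ r ≤ s, Real.exp (-α * s) * u s ≤
        (∫ τ in Iic s, Real.exp (-α * τ) * g τ) +
          Real.exp (-α * r) * (Ku + M / (-α)) := by
      intro r hr
      have hr0 : r ≤ 0 := hr.trans hs
      have h1 := hcmp r s hr hs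
      have h2 := hsplit r s hr hs
      have h3 : -(∫ τ in Iic r, Real.exp (-α * τ) * g τ) ≤
          M * (Real.exp (-α * r) / (-α)) := (neg_le_abs _).trans (hbd r hr0)
      have h4 : Real.exp (-α * r) * u r ≤ Real.exp (-α * r) * Ku :=
        mul_le_mul_of_nonneg_left ((le_abs_self _).trans (hKub r hr0))
          (Real.exp_pos _).le
      have h5 : Real.exp (-α * r) * (Ku + M / (-α)) =
          Real.exp (-α * r) * Ku + M * (Real.exp (-α * r) / (-α)) := by ring
      linarith
    have htend : Tendsto (fun r => (∫ τ in Iic s, Real.exp (-α * τ) * g τ) +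
        Real.exp (-α * r) * (Ku + M / (-α))) atBot
        (𝓝 ((∫ τ in Iic s, Real.exp (-α * τ) * g τ) + 0 * (Ku + M / (-α)))) := by
      refine tendsto_const_nhds.add (Tendsto.mul_const _ ?_)
      exact Real.tendsto_exp_atBot.comp (tendsto_id.const_mul_atBot hβ)
    have := ge_of_tendsto htend
      (by filter_upwards [eventually_le_atBot s] with r hr using key2 r hr)
    simpa using this
  · -- monotone part
    intro s t hst ht
    have h1 := hcmp s t hst ht
    have h2 := hsplit s t hst ht
    linarith

/-- for `A = diag(a i)` with `a i < 0`, and bounded `C¹` functions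
`v, c` on `(-∞,0]` with bounded derivatives, the function
`b(s) = ∫_{-∞}^s e^{A(s-τ)} sup{v'(τ)-Av(τ), c'(τ)-Ac(τ)} dτ` is well defined,
bounded, and satisfies `v ≤_A b` and `c ≤_A b`. -/
theorem stmt13 (m : ℕ) (a : Fin m → ℝ) (ha : ∀ i, a i < 0)
    (v c v' c' : ℝ → Fin m → ℝ)
    (hv : ∀ t ≤ (0:ℝ), HasDerivWithinAt v (v' t) (Iic 0) t)
    (hc : ∀ t ≤ (0:ℝ), HasDerivWithinAt c (c' t) (Iic 0) t)
    (hv'cont : ContinuousOn v' (Iic 0)) (hc'cont : ContinuousOn c' (Iic 0))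
    (Kv : ℝ) (hKv : ∀ t ≤ (0:ℝ), ‖v t‖ ≤ Kv ∧ ‖v' t‖ ≤ Kv)
    (Kc : ℝ) (hKc : ∀ t ≤ (0:ℝ), ‖c t‖ ≤ Kc ∧ ‖c' t‖ ≤ Kc)
    (b : ℝ → Fin m → ℝ)
    (hb : ∀ s ≤ (0:ℝ), ∀ i, b s i =
      ∫ τ in Iic s, Real.exp (a i * (s - τ)) *
        max (v' τ i - a i * v τ i) (c' τ i - a i * c τ i)) :
    -- well defined: the integrand is integrable
    (∀ s ≤ (0:ℝ), ∀ i, MeasureTheory.IntegrableOn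
      (fun τ => Real.exp (a i * (s - τ)) *
        max (v' τ i - a i * v τ i) (c' τ i - a i * c τ i)) (Iic s)) ∧
    -- bounded
    (∃ Kb : ℝ, ∀ s ≤ (0:ℝ), ‖b s‖ ≤ Kb) ∧
    -- v ≤_A b
    (∀ s ≤ (0:ℝ), ∀ i, v s i ≤ b s i) ∧
    (∀ i, MonotoneOn (fun t => Real.exp (-(a i) * t) * (b t i - v t i)) (Iic 0)) ∧
    -- c ≤_A b
    (∀ s ≤ (0:ℝ), ∀ i, c s i ≤ b s i) ∧
    (∀ i, MonotoneOn (fun t => Real.exp (-(a i) * t) * (b t i - c t i)) (Iic 0)) := by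
  have hKv0 : 0 ≤ Kv := le_trans (norm_nonneg _) (hKv 0 le_rfl).1
  have hKc0 : 0 ≤ Kc := le_trans (norm_nonneg _) (hKc 0 le_rfl).1
  -- componentwise continuity
  have hvconti : ∀ i, ContinuousOn (fun τ => v τ i) (Iic 0) := fun i t ht =>
    (continuous_apply i).continuousAt.comp_continuousWithinAt
      (hv t ht).continuousWithinAt
  have hcconti : ∀ i, ContinuousOn (fun τ => c τ i) (Iic 0) := fun i t ht =>
    (continuous_apply i).continuousAt.comp_continuousWithinAt
      (hc t ht).continuousWithinAt
  have hgcont : ∀ i, ContinuousOn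
      (fun τ => max (v' τ i - a i * v τ i) (c' τ i - a i * c τ i)) (Iic 0) := fun i =>
    (((continuous_apply i).comp_continuousOn hv'cont).sub
      (continuousOn_const.mul (hvconti i)  )).sup
    (((continuous_apply i).comp_continuousOn hc'cont).sub
      (continuousOn_const.mul (hcconti i)))
  -- bound on the max
  have hMb : ∀ i, ∀ τ ≤ (0:ℝ), |max (v' τ i - a i * v τ i) (c' τ i - a i * c τ i)| ≤
      (1 + |a i|) * (Kv + Kc) := by
    intro i τ hτ
    have h1 : |v' τ i| ≤ Kv := by
      simpa using (norm_le_pi_norm (v' τ) i).trans (hKv τ hτ).2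
    have h2 : |v τ i| ≤ Kv := by
      simpa using (norm_le_pi_norm (v τ) i).trans (hKv τ hτ).1
    have h3 : |c' τ i| ≤ Kc := by
      simpa using (norm_le_pi_norm (c' τ) i).trans (hKc τ hτ).2
    have h4 : |c τ i| ≤ Kc := by
      simpa using (norm_le_pi_norm (c τ) i).trans (hKc τ hτ).1
    have ha' : (0:ℝ) ≤ |a i| := abs_nonneg _
    have e1 := abs_le.mp h1
    have e3 := abs_le.mp h3
    have e2 : |a i * v τ i| ≤ |a i| * Kv := by
      rw [abs_mul]; exact mul_le_mul_of_nonneg_left h2 ha'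
    have e4 : |a i * c τ i| ≤ |a i| * Kc := by
      rw [abs_mul]; exact mul_le_mul_of_nonneg_left h4 ha'
    have e2' := abs_le.mp e2
    have e4' := abs_le.mp e4
    rw [abs_le]
    constructor
    · refine le_trans ?_ (le_max_left _ _)
      nlinarith [mul_nonneg ha' hKc0, mul_nonneg ha' hKv0]
    · refine max_le ?_ ?_
      · nlinarith [mul_nonneg ha' hKc0, mul_nonneg ha' hKv0]
      · nlinarith [mul_nonneg ha' hKc0, mul_nonneg ha' hKv0]
  -- componentwise derivatives
  have hdvi : ∀ i, ∀ t ≤ (0:ℝ), HasDerivWithinAt (fun τ => v τ i) (v' t i) (Iic 0) t :=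
    fun i t ht => hasDerivWithinAt_pi.mp (hv t ht) i
  have hdci : ∀ i, ∀ t ≤ (0:ℝ), HasDerivWithinAt (fun τ => c τ i) (c' t i) (Iic 0) t :=
    fun i t ht => hasDerivWithinAt_pi.mp (hc t ht) i
  -- the key facts, for v and for c
  have keyv := fun i => key (ha i) (fun τ => v τ i) (fun τ => v' τ i)
    (fun τ => max (v' τ i - a i * v τ i) (c' τ i - a i * c τ i))
    (hdvi i) ((continuous_apply i).comp_continuousOn hv'cont) (hgcont i)
    ((1 + |a i|) * (Kv + Kc)) (hMb i) Kv hKv0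
    (fun τ hτ => by simpa using (norm_le_pi_norm (v τ) i).trans (hKv τ hτ).1)
    (fun τ _ => le_max_left _ _)
  have keyc := fun i => key (ha i) (fun τ => c τ i) (fun τ => c' τ i)
    (fun τ => max (v' τ i - a i * v τ i) (c' τ i - a i * c τ i))
    (hdci i) ((continuous_apply i).comp_continuousOn hc'cont) (hgcont i)
    ((1 + |a i|) * (Kv + Kc)) (hMb i) Kc hKc0
    (fun τ hτ => by simpa using (norm_le_pi_norm (c τ) i).trans (hKc τ hτ).1)
    (fun τ _ => le_max_right _ _)
  have hinv : ∀ (x t : ℝ), Real.exp (-x * t) * Real.exp (x * t) = 1 := by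
    intro x t
    rw [← Real.exp_add, neg_mul, neg_add_cancel, Real.exp_zero]
  -- the relation between b and the normalized integral
  have hbB : ∀ s ≤ (0:ℝ), ∀ i, b s i = Real.exp (a i * s) *
      ∫ τ in Iic s, Real.exp (-(a i) * τ) *
        max (v' τ i - a i * v τ i) (c' τ i - a i * c τ i) := by
    intro s hs i
    rw [hb s hs i, ← MeasureTheory.integral_const_mul]
    congr 1
    funext τ
    rw [← mul_assoc, ← Real.exp_add]
    congr 2
    ring
  refine ⟨?_, ?_, ?_, ?_, ?_, ?_⟩
  · -- integrability
    intro s hs i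
    have h1 := ((keyv i).1 s hs).const_mul (Real.exp (a i * s))
    have heq : (fun τ => Real.exp (a i * (s - τ)) *
        max (v' τ i - a i * v τ i) (c' τ i - a i * c τ i)) =
        (fun τ => Real.exp (a i * s) * (Real.exp (-(a i) * τ) *
          max (v' τ i - a i * v τ i) (c' τ i - a i * c τ i))) := by
      funext τ
      rw [← mul_assoc, ← Real.exp_add]
      congr 2
      ring
    rw [heq]
    exact h1
  · -- boundedness
    rcases Nat.eq_zero_or_pos m with hm | hm
    · refine ⟨0, fun s _ => ?_⟩
      subst hm
      have : b s = 0 := funext fun i => i.elim0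
      rw [this, norm_zero]
    · haveI : Nonempty (Fin m) := ⟨⟨0, hm⟩⟩
      have hbi : ∀ s ≤ (0:ℝ), ∀ i, |b s i| ≤
          (1 + |a i|) * (Kv + Kc) / (-(a i)) := by
        intro s hs i
        have h1 := (keyv i).2.1 s hs
        rw [hbB s hs i, abs_mul, abs_of_pos (Real.exp_pos _)]
        have h2 := mul_le_mul_of_nonneg_left h1 (Real.exp_pos (a i * s)).le
        refine h2.trans_eq ?_
        have h3 := hinv (a i) s
        have h4 : Real.exp (a i * s) * ((1 + |a i|) * (Kv + Kc) *
            (Real.exp (-(a i) * s) / (-(a i)))) =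
            (Real.exp (-(a i) * s) * Real.exp (a i * s)) *
              ((1 + |a i|) * (Kv + Kc) / (-(a i))) := by ring
        rw [h4, h3, one_mul]
      have hnn : ∀ i : Fin m, (0:ℝ) ≤ (1 + |a i|) * (Kv + Kc) / (-(a i)) := fun i =>
        div_nonneg (mul_nonneg (by positivity) (by linarith)) (by linarith [ha i])
      refine ⟨Finset.univ.sup' Finset.univ_nonempty
        (fun i => (1 + |a i|) * (Kv + Kc) / (-(a i))), fun s hs => ?_⟩
      rw [pi_norm_le_iff_of_nonneg]
      · intro i
        rw [Real.norm_eq_abs]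
        exact (hbi s hs i).trans (Finset.le_sup' (fun i => (1 + |a i|) * (Kv + Kc) / (-(a i))) (Finset.mem_univ i))
      · exact le_trans (hnn (Classical.arbitrary _))
          (Finset.le_sup' (fun i => (1 + |a i|) * (Kv + Kc) / (-(a i)))
            (Finset.mem_univ _))
  · -- v ≤ b pointwise
    intro s hs i
    have h3 := (keyv i).2.2.1 s hs
    beta_reduce at h3
    rw [hbB s hs i]
    have h2 := mul_le_mul_of_nonneg_left h3 (Real.exp_pos (a i * s)).le
    have h4 : Real.exp (a i * s) * (Real.exp (-(a i) * s) * v s i) = v s i := by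
      rw [← mul_assoc, mul_comm (Real.exp (a i * s)), hinv, one_mul]
    rw [h4] at h2
    exact h2
  · -- monotone for v
    intro i x hx y hy hxy
    have hrw : ∀ t ≤ (0:ℝ), Real.exp (-(a i) * t) * (b t i - v t i) =
        (∫ τ in Iic t, Real.exp (-(a i) * τ) *
          max (v' τ i - a i * v τ i) (c' τ i - a i * c τ i)) -
          Real.exp (-(a i) * t) * v t i := by
      intro t ht
      rw [hbB t ht i, mul_sub, ← mul_assoc, hinv, one_mul]
    show Real.exp (-(a i) * x) * (b x i - v x i) ≤
      Real.exp (-(a i) * y) * (b y i - v y i)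
    rw [hrw x hx, hrw y hy]
    exact (keyv i).2.2.2 x y hxy hy
  · -- c ≤ b pointwise
    intro s hs i
    have h3 := (keyc i).2.2.1 s hs
    beta_reduce at h3
    rw [hbB s hs i]
    have h2 := mul_le_mul_of_nonneg_left h3 (Real.exp_pos (a i * s)).le
    have h4 : Real.exp (a i * s) * (Real.exp (-(a i) * s) * c s i) = c s i := by
      rw [← mul_assoc, mul_comm (Real.exp (a i * s)), hinv, one_mul]
    rw [h4] at h2
    exact h2
  · -- monotone for c
    intro i x hx y hy hxy
    have hrw : ∀ t ≤ (0:ℝ), Real.exp (-(a i) * t) * (b t i - c t i) =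
        (∫ τ in Iic t, Real.exp (-(a i) * τ) *
          max (v' τ i - a i * v τ i) (c' τ i - a i * c τ i)) -
          Real.exp (-(a i) * t) * c t i := by
      intro t ht
      rw [hbB t ht i, mul_sub, ← mul_assoc, hinv, one_mul]
    show Real.exp (-(a i) * x) * (b x i - c x i) ≤
      Real.exp (-(a i) * y) * (b y i - c y i)
    rw [hrw x hx, hrw y hy]
    exact (keyc i).2.2.2 x y hxy hy
end
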